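/- arXiv:1402.2064 — 4 statements merged into one kernel-verified Lean document; each statement's English description precedes it below -/
import Mathlib

section
/- Let H be a finite hypergraph on the vertex set [k] = {1, …, k} that is balanced, i.e. admits a perfect fractional matching, and let ℓ(h) = |h| denote the number of vertices of the edge h. If α > 0 satisfies τ*_ℓ(H) ≤ α·ν_ℓ(H), then H contains a matching M with ∑_{m ∈ M} |m| ≥ k/α. -/
/-- The weighted matching number `ν_w`: the maximum of `∑_{e ∈ M} w e` over
matchings `M` in `H`. -/
noncomputable def nuW {α : Type*} (H : Set (Set α)) (w : Set α → ℕ) : ℕ :=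
  sSup {m | ∃ M : Finset (Set α), ↑M ⊆ H ∧
    (M : Set (Set α)).PairwiseDisjoint id ∧ m = ∑ e ∈ M, w e}

/-- The fractional weighted covering number `τ*_w`: the infimum of `∑ₓ g x`
over nonnegative `g : α → ℝ` with finite support satisfying
`∑_{x ∈ e} g x ≥ w e` for every edge `e`. -/
noncomputable def tauStarW {α : Type*} (H : Set (Set α)) (w : Set α → ℕ) : ℝ :=
  sInf {t | ∃ g : α → ℝ, (Function.support g).Finite ∧ (∀ x, 0 ≤ g x) ∧
    (∀ e ∈ H, (w e : ℝ) ≤ ∑ᶠ x ∈ e, g x) ∧ t = ∑ᶠ x, g x}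

open Classical in
/-- Any feasible fractional cover has total weight at least `k`. -/
lemma key_lower_bound (k : ℕ) (H : Set (Set (Fin k))) (hfin : H.Finite)
    (f : Set (Fin k) → ℝ) (hf0 : ∀ e, 0 ≤ f e) (hfs : ∀ e, f e ≠ 0 → e ∈ H)
    (hperf : ∀ v : Fin k, ∑ᶠ e ∈ {e : Set (Fin k) | v ∈ e}, f e = 1)
    (g : Fin k → ℝ) (hg0 : ∀ x, 0 ≤ g x)
    (hgc : ∀ e ∈ H, ((e.ncard : ℕ) : ℝ) ≤ ∑ᶠ x ∈ e, g x) :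
    (k : ℝ) ≤ ∑ᶠ x, g x := by
  set E : Finset (Set (Fin k)) := hfin.toFinset with hE
  have hmemE : ∀ e, e ∈ E ↔ e ∈ H := fun e => hfin.mem_toFinset
  -- for each x, the sum of f over edges containing x (within E) is 1
  have hEfilter : ∀ x : Fin k, ∑ e ∈ E.filter (fun e => x ∈ e), f e = 1 := by
    intro x
    have h1 := hperf x
    have hfin2 : ({e : Set (Fin k) | x ∈ e} ∩ Function.support f).Finite :=
      hfin.subset (fun e he => hfs e he.2)
    rw [finsum_mem_eq_sum f hfin2] at h1
    rw [← h1]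
    refine (Finset.sum_subset ?_ ?_).symm
    · intro e he
      obtain ⟨hx, hf⟩ := (Set.Finite.mem_toFinset hfin2).mp he
      rw [Finset.mem_filter, hmemE]
      exact ⟨hfs e hf, hx⟩
    · intro e he hne
      by_contra hfe
      apply hne
      rw [Finset.mem_filter] at he
      exact (Set.Finite.mem_toFinset hfin2).mpr ⟨he.2, hfe⟩
  -- counting sums
  have hdouble : ∑ x : Fin k, g x
      = ∑ e ∈ E, f e * ∑ x ∈ Finset.univ.filter (fun x => x ∈ e), g x := by
    calc ∑ x : Fin k, g x
        = ∑ x : Fin k, (∑ e ∈ E.filter (fun e => x ∈ e), f e) * g x := by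
          simp [hEfilter]
      _ = ∑ x : Fin k, ∑ e ∈ E, (if x ∈ e then f e * g x else 0) := by
          refine Finset.sum_congr rfl fun x _ => ?_
          rw [Finset.sum_mul, Finset.sum_filter]
      _ = ∑ e ∈ E, ∑ x : Fin k, (if x ∈ e then f e * g x else 0) := Finset.sum_comm
      _ = ∑ e ∈ E, f e * ∑ x ∈ Finset.univ.filter (fun x => x ∈ e), g x := by
          refine Finset.sum_congr rfl fun e _ => ?_
          rw [Finset.mul_sum, Finset.sum_filter]
  have hcount : ∑ e ∈ E, f e * ((e.ncard : ℕ) : ℝ) = (k : ℝ) := by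
    have : ∀ e : Set (Fin k), ((e.ncard : ℕ) : ℝ)
        = ∑ x ∈ Finset.univ.filter (fun x => x ∈ e), (1 : ℝ) := by
      intro e
      rw [Finset.sum_const, nsmul_eq_mul, mul_one]
      congr 1
      rw [Set.ncard_eq_toFinset_card' e]
      congr 1
      ext x
      simp
    calc ∑ e ∈ E, f e * ((e.ncard : ℕ) : ℝ)
        = ∑ e ∈ E, ∑ x : Fin k, (if x ∈ e then f e else 0) := by
          refine Finset.sum_congr rfl fun e _ => ?_
          rw [this e, Finset.mul_sum, Finset.sum_filter]
          simp
      _ = ∑ x : Fin k, ∑ e ∈ E, (if x ∈ e then f e else 0) := Finset.sum_comm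
      _ = ∑ x : Fin k, (1 : ℝ) := by
          refine Finset.sum_congr rfl fun x _ => ?_
          rw [← Finset.sum_filter, hEfilter]
      _ = (k : ℝ) := by simp
  rw [finsum_eq_sum_of_fintype g, hdouble, ← hcount]
  refine Finset.sum_le_sum fun e he => ?_
  refine mul_le_mul_of_nonneg_left ?_ (hf0 e)
  have heH : e ∈ H := (hmemE e).1 he
  have hco : (↑(Finset.univ.filter (fun x => x ∈ e)) : Set (Fin k)) = e := by
    ext x; simp
  calc ((e.ncard : ℕ) : ℝ) ≤ ∑ᶠ x ∈ e, g x := hgc e heH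
    _ = ∑ x ∈ Finset.univ.filter (fun x => x ∈ e), g x := by
        rw [← finsum_mem_coe_finset, hco]

/-- Let `H` be a finite balanced hypergraph on `[k]` (i.e. admitting a perfect
fractional matching `f`), with edge weights `ℓ(h) = |h|`.  If
`τ*_ℓ(H) ≤ α·ν_ℓ(H)`, then `H` contains a matching `M` with
`∑_{m ∈ M} |m| ≥ k/α`. -/
theorem exists_matching_of_balanced (k : ℕ) (H : Set (Set (Fin k)))
    (hfin : H.Finite)
    (f : Set (Fin k) → ℝ) (hf0 : ∀ e, 0 ≤ f e) (hfs : ∀ e, f e ≠ 0 → e ∈ H)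
    (hperf : ∀ v : Fin k, ∑ᶠ e ∈ {e : Set (Fin k) | v ∈ e}, f e = 1)
    (α : ℝ) (hα : 0 < α)
    (h : tauStarW H (fun e => e.ncard) ≤ α * (nuW H (fun e => e.ncard) : ℝ)) :
    ∃ M : Finset (Set (Fin k)), ↑M ⊆ H ∧
      (M : Set (Set (Fin k))).PairwiseDisjoint id ∧
      (k : ℝ) / α ≤ ∑ e ∈ M, (e.ncard : ℝ) := by
  classical
  -- k ≤ tauStarW
  have htau : (k : ℝ) ≤ tauStarW H (fun e => e.ncard) := by
    apply le_csInf
    · refine ⟨(k : ℝ), fun _ => 1, (Set.finite_univ.subset (Set.subset_univ _)), fun _ => zero_le_one, ?_, ?_⟩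
      · intro e _
        have : ∑ᶠ x ∈ e, (1 : ℝ) = (e.ncard : ℝ) := by
          rw [← Set.Finite.coe_toFinset e.toFinite, finsum_mem_coe_finset]
          simp [Set.ncard_coe_finset, Set.ncard_eq_toFinset_card', Set.toFinset_setOf]
        exact le_of_eq this.symm
      · rw [finsum_eq_sum_of_fintype]
        simp
    · rintro t ⟨g, hgfin, hg0, hgc, rfl⟩
      exact key_lower_bound k H hfin f hf0 hfs hperf g hg0 hgc
  -- nuW is attained
  set S : Set ℕ := {m | ∃ M : Finset (Set (Fin k)), ↑M ⊆ H ∧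
    (M : Set (Set (Fin k))).PairwiseDisjoint id ∧ m = ∑ e ∈ M, (fun e => Set.ncard e) e} with hS
  have hSne : S.Nonempty := ⟨0, ∅, by simp⟩
  have hSbdd : BddAbove S := by
    refine ⟨∑ e ∈ hfin.toFinset, e.ncard, ?_⟩
    rintro m ⟨M, hMH, _, rfl⟩
    apply Finset.sum_le_sum_of_subset
    intro e he
    rw [Set.Finite.mem_toFinset]
    exact hMH he
  have hmem : nuW H (fun e => e.ncard) ∈ S := Nat.sSup_mem hSne hSbdd
  obtain ⟨M, hMH, hMdisj, hMsum⟩ := hmem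
  refine ⟨M, hMH, hMdisj, ?_⟩
  rw [div_le_iff₀ hα]
  have hchain : (k : ℝ) ≤ α * (nuW H (fun e => e.ncard) : ℝ) := le_trans htau h
  calc (k : ℝ) ≤ α * (nuW H (fun e => e.ncard) : ℝ) := hchain
    _ = (nuW H (fun e => e.ncard) : ℝ) * α := mul_comm _ _
    _ = (∑ e ∈ M, (e.ncard : ℝ)) * α := by rw [hMsum]; push_cast; ring
end

section
/- Let d ≥ 1 and let H be a balanced finite hypergraph of discrete d-intervals on the vertex set [k] = {1, …, k}. Then H contains a matching M with ∑_{m ∈ M} |m| ≥ k/(2d), where |m| is the number of vertices of m. -/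
/-- A discrete `d`-interval on `[k] = {1, …, k}`: a subset of `{1, …, k} ⊆ ℕ`
that is a union of at most `d` pairwise disjoint sets of consecutive
integers. -/
def IsDiscreteDInterval (d k : ℕ) (e : Set ℕ) : Prop :=
  e ⊆ Set.Icc 1 k ∧
  ∃ (n : ℕ) (a b : Fin n → ℕ), n ≤ d ∧ (∀ i, a i ≤ b i) ∧
    (Set.univ : Set (Fin n)).PairwiseDisjoint (fun i => Set.Icc (a i) (b i)) ∧
    e = ⋃ i, Set.Icc (a i) (b i)

lemma lset_ncard_le {d k : ℕ} {e : Set ℕ} (h : IsDiscreteDInterval d k e) :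
    {v ∈ e | v - 1 ∉ e}.ncard ≤ d := by
  obtain ⟨hsub, n, a, b, hnd, hab, hdisj, he⟩ := h
  have hsubr : {v ∈ e | v - 1 ∉ e} ⊆ Set.range a := by
    rintro v ⟨hv, hv1⟩
    rw [he, Set.mem_iUnion] at hv
    obtain ⟨i, h1, h2⟩ := hv
    rcases eq_or_lt_of_le h1 with heq | hlt
    · exact ⟨i, heq⟩
    · exfalso
      apply hv1
      rw [he, Set.mem_iUnion]
      exact ⟨i, Nat.le_sub_one_of_lt hlt, le_trans (Nat.sub_le v 1) h2⟩
  have h2 : (Set.range a).ncard ≤ n := by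
    have : (Set.range a) = ↑(Finset.image a Finset.univ) := by simp
    rw [this, Set.ncard_coe_finset]
    exact Finset.card_image_le.trans (by simp)
  exact le_trans (Set.ncard_le_ncard hsubr (Set.finite_range a)) (le_trans h2 hnd)

lemma pair_meet {k : ℕ} {e e' : Set ℕ} (he : e ⊆ Set.Icc 1 k) {v : ℕ}
    (hv : v ∈ e) (hv' : v ∈ e') :
    (∃ p, (p ∈ e ∧ p - 1 ∉ e) ∧ p ∈ e') ∨ (∃ p, (p ∈ e' ∧ p - 1 ∉ e') ∧ p ∈ e) := by
  classical
  have hex : ∃ u, ∀ w, u ≤ w → w ≤ v → w ∈ e ∧ w ∈ e' := by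
    refine ⟨v, fun w hw hw' => ?_⟩
    have : w = v := le_antisymm hw' hw
    subst this; exact ⟨hv, hv'⟩
  set p := Nat.find hex with hp
  have hpA : ∀ w, p ≤ w → w ≤ v → w ∈ e ∧ w ∈ e' := Nat.find_spec hex
  have hpv : p ≤ v := Nat.find_min' hex (by
    intro w hw hw'
    have : w = v := le_antisymm hw' hw
    subst this; exact ⟨hv, hv'⟩)
  have hp1 : 1 ≤ p := by
    by_contra h0
    push_neg at h0
    interval_cases p
    · have := (hpA 0 le_rfl (Nat.zero_le v)).1
      have := (he this).1
      omega
  have hnotA : ¬ (∀ w, p - 1 ≤ w → w ≤ v → w ∈ e ∧ w ∈ e') :=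
    Nat.find_min hex (by omega)
  push_neg at hnotA
  obtain ⟨w, hw1, hw2, hw3⟩ := hnotA
  have hwp : w = p - 1 := by
    by_contra hne
    have hpw : p ≤ w := by omega
    exact hw3 (hpA w hpw hw2).1 (hpA w hpw hw2).2
  subst hwp
  have hpe : p ∈ e ∧ p ∈ e' := hpA p le_rfl hpv
  by_cases hc : p - 1 ∈ e
  · right
    exact ⟨p, ⟨hpe.2, hw3 hc⟩, hpe.1⟩
  · left
    exact ⟨p, ⟨hpe.1, hc⟩, hpe.2⟩

open Classical in
lemma exists_good (d k : ℕ) (S : Finset (Set ℕ)) (hS : S.Nonempty)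
    (hsub : ∀ e ∈ S, e ⊆ Set.Icc 1 k)
    (hLcard : ∀ e ∈ S, ({v ∈ e | v - 1 ∉ e}).ncard ≤ d)
    (x : Set ℕ → ℝ) (hpos : ∀ e ∈ S, 0 < x e)
    (hcov : ∀ v ∈ Set.Icc 1 k, ∑ e ∈ S.filter (fun e => v ∈ e), x e ≤ 1) :
    ∃ e0 ∈ S, ∑ e ∈ S.filter (fun e => (e ∩ e0).Nonempty), x e ≤ 2 * d := by
  by_contra hcon
  push_neg at hcon
  -- left-endpoint finsets
  set Lf : Set ℕ → Finset ℕ :=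
    fun e => (Finset.Icc 1 k).filter (fun v => v ∈ e ∧ v - 1 ∉ e) with hLf
  have hLfcoe : ∀ e ∈ S, (Lf e : Set ℕ) = {v ∈ e | v - 1 ∉ e} := by
    intro e he
    ext v
    simp only [hLf, Finset.coe_filter, Set.mem_setOf_eq, Finset.mem_Icc]
    constructor
    · rintro ⟨_, h2, h3⟩; exact ⟨h2, h3⟩
    · rintro ⟨h2, h3⟩
      have := hsub e he h2
      simp only [Set.mem_Icc] at this
      exact ⟨⟨this.1, this.2⟩, h2, h3⟩
  have hLfcard : ∀ e ∈ S, (Lf e).card ≤ d := by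
    intro e he
    have := hLcard e he
    rwa [← hLfcoe e he, Set.ncard_coe_finset] at this
  have hLfmem : ∀ e ∈ S, ∀ p ∈ Lf e, p ∈ e ∧ p - 1 ∉ e ∧ p ∈ Set.Icc 1 k := by
    intro e he p hp
    simp only [hLf, Finset.mem_filter, Finset.mem_Icc] at hp
    exact ⟨hp.2.1, hp.2.2, Set.mem_Icc.mpr ⟨hp.1.1, hp.1.2⟩⟩
  -- the indicator of "some left endpoint of e lies in e0"
  set B : Set ℕ → Set ℕ → ℝ :=
    fun e e0 => if ∃ p ∈ Lf e, p ∈ e0 then 1 else 0 with hB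
  have hB0 : ∀ e e0, 0 ≤ B e e0 := by
    intro e e0; simp only [hB]; split <;> norm_num
  have hB1 : ∀ e e0, B e e0 ≤ 1 := by
    intro e e0; simp only [hB]; split <;> norm_num
  -- key: meeting pairs are witnessed by B
  have hkey : ∀ e ∈ S, ∀ e0 ∈ S, (e ∩ e0).Nonempty → 1 ≤ B e e0 + B e0 e := by
    intro e he e0 he0 ⟨v, hv, hv0⟩
    rcases pair_meet (hsub e he) hv hv0 with ⟨p, ⟨hp1, hp2⟩, hp3⟩ | ⟨p, ⟨hp1, hp2⟩, hp3⟩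
    · -- p ∈ L e, p ∈ e0 : B e e0 = 1
      have hpl : p ∈ Lf e := by
        simp only [hLf, Finset.mem_filter, Finset.mem_Icc]
        have := hsub e he hp1
        simp only [Set.mem_Icc] at this
        exact ⟨⟨this.1, this.2⟩, hp1, hp2⟩
      have : B e e0 = 1 := by
        simp only [hB]
        exact if_pos ⟨p, hpl, hp3⟩
      linarith [hB0 e0 e]
    · have hpl : p ∈ Lf e0 := by
        simp only [hLf, Finset.mem_filter, Finset.mem_Icc]
        have := hsub e0 he0 hp1
        simp only [Set.mem_Icc] at this
        exact ⟨⟨this.1, this.2⟩, hp1, hp2⟩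
      have : B e0 e = 1 := by
        simp only [hB]
        exact if_pos ⟨p, hpl, hp3⟩
      linarith [hB0 e e0]
  -- the double sum T
  have hT1 : (2 * d) * ∑ e ∈ S, x e <
      ∑ e0 ∈ S, x e0 * ∑ e ∈ S.filter (fun e => (e ∩ e0).Nonempty), x e := by
    have hrw : (2 * (d:ℝ)) * ∑ e ∈ S, x e = ∑ e0 ∈ S, x e0 * (2 * d) := by
      rw [← Finset.sum_mul]; ring
    rw [hrw]
    exact Finset.sum_lt_sum_of_nonempty hS fun e0 he0 =>
      mul_lt_mul_of_pos_left (hcon e0 he0) (hpos e0 he0)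
  -- bound each inner sum by B-sums
  have hT2 : ∀ e0 ∈ S, ∑ e ∈ S.filter (fun e => (e ∩ e0).Nonempty), x e ≤
      ∑ e ∈ S, x e * (B e e0 + B e0 e) := by
    intro e0 he0
    rw [Finset.sum_filter]
    refine Finset.sum_le_sum ?_
    intro e he
    split
    · next hmeet =>
      have h1 := hkey e he e0 he0 hmeet
      have h2 := (hpos e he).le
      nlinarith
    · exact mul_nonneg (hpos e he).le (by linarith [hB0 e e0, hB0 e0 e])
  -- single-endpoint bound
  have hsingle : ∀ e ∈ S, ∀ e0 ∈ S, B e e0 ≤ ∑ p ∈ Lf e, (if p ∈ e0 then (1:ℝ) else 0) := by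
    intro e he e0 he0
    simp only [hB]
    split
    · next hex =>
      obtain ⟨p, hp1, hp2⟩ := hex
      have : (if p ∈ e0 then (1:ℝ) else 0) = 1 := if_pos hp2
      calc (1:ℝ) = if p ∈ e0 then (1:ℝ) else 0 := this.symm
        _ ≤ _ := Finset.single_le_sum (f := fun p => if p ∈ e0 then (1:ℝ) else 0)
            (fun i _ => by by_cases h : i ∈ e0 <;> simp [h]) hp1
    · exact Finset.sum_nonneg fun i _ => by split <;> norm_num
  -- the B-weighted neighborhood of e is at most d
  have hnbhd : ∀ e ∈ S, ∑ e0 ∈ S, x e0 * B e e0 ≤ d := by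
    intro e he
    calc ∑ e0 ∈ S, x e0 * B e e0
        ≤ ∑ e0 ∈ S, x e0 * ∑ p ∈ Lf e, (if p ∈ e0 then (1:ℝ) else 0) := by
          refine Finset.sum_le_sum fun e0 he0 => ?_
          exact mul_le_mul_of_nonneg_left (hsingle e he e0 he0) (hpos e0 he0).le
      _ = ∑ p ∈ Lf e, ∑ e0 ∈ S, x e0 * (if p ∈ e0 then (1:ℝ) else 0) := by
          rw [Finset.sum_comm]
          congr 1
          ext e0
          rw [Finset.mul_sum]
      _ = ∑ p ∈ Lf e, ∑ e0 ∈ S.filter (fun e0 => p ∈ e0), x e0 := by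
          congr 1
          ext p
          rw [Finset.sum_filter]
          congr 1
          ext e0
          split <;> simp
      _ ≤ ∑ p ∈ Lf e, 1 := by
          refine Finset.sum_le_sum fun p hp => ?_
          exact hcov p (hLfmem e he p hp).2.2
      _ = (Lf e).card := by simp
      _ ≤ d := by exact_mod_cast hLfcard e he
  -- combine
  have hfinal : ∑ e0 ∈ S, x e0 * ∑ e ∈ S.filter (fun e => (e ∩ e0).Nonempty), x e ≤
      (2 * d) * ∑ e ∈ S, x e := by
    calc ∑ e0 ∈ S, x e0 * ∑ e ∈ S.filter (fun e => (e ∩ e0).Nonempty), x e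
        ≤ ∑ e0 ∈ S, x e0 * ∑ e ∈ S, x e * (B e e0 + B e0 e) := by
          refine Finset.sum_le_sum fun e0 he0 => ?_
          exact mul_le_mul_of_nonneg_left (hT2 e0 he0) (hpos e0 he0).le
      _ = (∑ e0 ∈ S, ∑ e ∈ S, x e0 * (x e * B e e0))
          + ∑ e0 ∈ S, ∑ e ∈ S, x e0 * (x e * B e0 e) := by
          rw [← Finset.sum_add_distrib]
          congr 1
          ext e0
          rw [Finset.mul_sum, ← Finset.sum_add_distrib]
          congr 1
          ext e
          ring
      _ = (∑ e ∈ S, x e * ∑ e0 ∈ S, x e0 * B e e0)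
          + ∑ e0 ∈ S, x e0 * ∑ e ∈ S, x e * B e0 e := by
          congr 1
          · rw [Finset.sum_comm]
            congr 1
            ext e
            rw [Finset.mul_sum]
            congr 1
            ext e0
            ring
          · congr 1
            ext e0
            rw [Finset.mul_sum]
      _ ≤ (∑ e ∈ S, x e * d) + ∑ e0 ∈ S, x e0 * d := by
          gcongr with e he e0 he0
          · exact (hpos e he).le
          · exact hnbhd e he
          · exact (hpos e0 he0).le
          · exact hnbhd e0 he0
      _ = (2 * d) * ∑ e ∈ S, x e := by
          rw [← Finset.sum_add_distrib, Finset.mul_sum]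
          congr 1
          ext e
          ring
  linarith

open Classical in
theorem thmA (d k : ℕ) :
    ∀ (N : ℕ) (E : Finset (Set ℕ)) (x w : Set ℕ → ℝ), E.card ≤ N →
    (∀ e ∈ E, e ⊆ Set.Icc 1 k ∧ e.Nonempty ∧ {v ∈ e | v - 1 ∉ e}.ncard ≤ d) →
    (∀ e, 0 ≤ x e) → (∀ e, e ∉ E → x e = 0) → (∀ e, 0 ≤ w e) →
    (∀ v ∈ Set.Icc 1 k, ∑ e ∈ E.filter (fun e => v ∈ e), x e ≤ 1) →
    ∃ M : Finset (Set ℕ), (∀ m ∈ M, m ∈ E) ∧ (M : Set (Set ℕ)).PairwiseDisjoint id ∧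
      ∑ e ∈ E, x e * w e ≤ 2 * d * ∑ m ∈ M, w m := by
  intro N
  induction N with
  | zero =>
    intro E x w hcard _ _ _ _ _
    have hE : E = ∅ := Finset.card_eq_zero.mp (Nat.le_zero.mp hcard)
    subst hE
    exact ⟨∅, by simp, by simp, by simp⟩
  | succ n ih =>
    intro E x w hcard hstr hx0 hxs hw0 hcov
    set S := E.filter (fun e => x e ≠ 0) with hSdef
    by_cases hSne : S.Nonempty
    · -- get a good edge e0
      have hpos : ∀ e ∈ S, 0 < x e := by
        intro e he
        rw [hSdef, Finset.mem_filter] at he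
        exact lt_of_le_of_ne (hx0 e) (Ne.symm he.2)
      have hSsub : S ⊆ E := Finset.filter_subset _ _
      obtain ⟨e0, he0S, hω⟩ := exists_good d k S hSne
        (fun e he => (hstr e (hSsub he)).1)
        (fun e he => (hstr e (hSsub he)).2.2)
        x hpos
        (by
          intro v hv
          refine le_trans (Finset.sum_le_sum_of_subset_of_nonneg ?_ ?_) (hcov v hv)
          · exact Finset.filter_subset_filter _ hSsub
          · intro e _ _; exact hx0 e)
      have he0E : e0 ∈ E := hSsub he0S
      have he0ne : e0.Nonempty := (hstr e0 he0E).2.1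
      set c := w e0 with hc
      have hc0 : 0 ≤ c := hw0 e0
      set w' : Set ℕ → ℝ :=
        fun e => if (e ∩ e0).Nonempty then max (w e - c) 0 else w e with hw'
      have hw'0 : ∀ e, 0 ≤ w' e := by
        intro e
        simp only [hw']
        split
        · exact le_max_right _ _
        · exact hw0 e
      have hw'le : ∀ e, w' e ≤ w e := by
        intro e
        simp only [hw']
        split
        · exact max_le (by linarith [hw0 e]) (hw0 e)
        · exact le_rfl
      have hdecomp : ∀ e, w e ≤ w' e + (if (e ∩ e0).Nonempty then c else 0) := by
        intro e
        simp only [hw']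
        split
        · have := le_max_left (w e - c) 0; linarith
        · simp
      have hw'e0 : w' e0 = 0 := by
        simp only [hw']
        rw [if_pos (by rwa [Set.inter_self])]
        simp [hc]
      set E' := E.filter (fun e => 0 < w' e) with hE'
      have hE'sub : E' ⊆ E := Finset.filter_subset _ _
      have he0nE' : e0 ∉ E' := by
        rw [hE', Finset.mem_filter]
        rintro ⟨-, h⟩
        rw [hw'e0] at h
        exact lt_irrefl _ h
      have hcard' : E'.card ≤ n := by
        have hss : E' ⊂ E := ⟨hE'sub, fun h => he0nE' (h he0E)⟩
        have := Finset.card_lt_card hss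
        omega
      set x' : Set ℕ → ℝ := fun e => if e ∈ E' then x e else 0 with hx'
      have hx'0 : ∀ e, 0 ≤ x' e := by
        intro e; simp only [hx']; split
        · exact hx0 e
        · exact le_rfl
      obtain ⟨M', hM'mem, hM'disj, hM'bound⟩ := ih E' x' w' hcard'
        (fun e he => hstr e (hE'sub he))
        hx'0
        (fun e he => by simp only [hx']; rw [if_neg he])
        (fun e => hw'0 e)
        (by
          intro v hv
          have h1 : ∑ e ∈ E'.filter (fun e => v ∈ e), x' e
              = ∑ e ∈ E'.filter (fun e => v ∈ e), x e := by
            refine Finset.sum_congr rfl fun e he => ?_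
            simp only [hx']
            rw [if_pos (Finset.mem_of_mem_filter e he)]
          rw [h1]
          refine le_trans (Finset.sum_le_sum_of_subset_of_nonneg ?_ ?_) (hcov v hv)
          · exact Finset.filter_subset_filter _ hE'sub
          · intro e _ _; exact hx0 e)
      -- common arithmetic
      have hcommon : ∑ e ∈ E, x e * w e ≤ 2 * d * (∑ m ∈ M', w' m + c) := by
        have step1 : ∑ e ∈ E, x e * w e ≤
            (∑ e ∈ E, x e * w' e) + ∑ e ∈ E, x e * (if (e ∩ e0).Nonempty then c else 0) := by
          rw [← Finset.sum_add_distrib]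
          refine Finset.sum_le_sum fun e he => ?_
          have := hdecomp e
          have := hx0 e
          nlinarith
        have step2 : ∑ e ∈ E, x e * w' e = ∑ e ∈ E', x' e * w' e := by
          rw [hE']
          rw [Finset.sum_filter]
          refine Finset.sum_congr rfl fun e he => ?_
          by_cases hp : 0 < w' e
          · rw [if_pos hp]
            simp only [hx']
            rw [if_pos (by rw [hE', Finset.mem_filter]; exact ⟨he, hp⟩)]
          · rw [if_neg hp]
            have : w' e = 0 := le_antisymm (not_lt.mp hp) (hw'0 e)
            rw [this, mul_zero]
        have step3 : ∑ e ∈ E, x e * (if (e ∩ e0).Nonempty then c else 0) ≤ 2 * d * c := by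
          have heq : ∑ e ∈ E, x e * (if (e ∩ e0).Nonempty then c else 0)
              = ∑ e ∈ E.filter (fun e => (e ∩ e0).Nonempty), x e * c := by
            rw [Finset.sum_filter]
            refine Finset.sum_congr rfl fun e he => ?_
            split <;> simp
          rw [heq, ← Finset.sum_mul]
          have hsum : ∑ e ∈ E.filter (fun e => (e ∩ e0).Nonempty), x e
              = ∑ e ∈ S.filter (fun e => (e ∩ e0).Nonempty), x e := by
            refine (Finset.sum_subset ?_ ?_).symm
            · exact Finset.filter_subset_filter _ hSsub
            · intro e he hne
              by_contra hxe
              apply hne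
              rw [Finset.mem_filter] at he ⊢
              exact ⟨Finset.mem_filter.mpr ⟨he.1, hxe⟩, he.2⟩
          have hsumnn : 0 ≤ ∑ e ∈ S.filter (fun e => (e ∩ e0).Nonempty), x e :=
            Finset.sum_nonneg fun e _ => hx0 e
          rw [hsum]
          calc (∑ e ∈ S.filter (fun e => (e ∩ e0).Nonempty), x e) * c
              ≤ (2 * d) * c := mul_le_mul_of_nonneg_right hω hc0
            _ = 2 * d * c := by ring
        calc ∑ e ∈ E, x e * w e
            ≤ (∑ e ∈ E, x e * w' e) + ∑ e ∈ E, x e * (if (e ∩ e0).Nonempty then c else 0) :=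
              step1
          _ ≤ (∑ e ∈ E', x' e * w' e) + 2 * d * c := by rw [step2]; linarith
          _ ≤ 2 * d * ∑ m ∈ M', w' m + 2 * d * c := by linarith
          _ = 2 * d * (∑ m ∈ M', w' m + c) := by ring
      by_cases hA : ∀ m ∈ M', ¬ (m ∩ e0).Nonempty
      · -- add e0 to the matching
        have he0nM' : e0 ∉ M' := by
          intro h
          exact hA e0 h (by rwa [Set.inter_self])
        refine ⟨insert e0 M', ?_, ?_, ?_⟩
        · intro m hm
          rcases Finset.mem_insert.mp hm with h | h
          · subst h; exact he0E
          · exact hE'sub (hM'mem m h)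
        · rw [Finset.coe_insert]
          refine Set.PairwiseDisjoint.insert hM'disj ?_
          intro m hm hne
          have : m ∩ e0 = ∅ := Set.not_nonempty_iff_eq_empty.mp (hA m hm)
          have : Disjoint m e0 := Set.disjoint_iff_inter_eq_empty.mpr this
          exact this.symm
        · rw [Finset.sum_insert he0nM']
          have hge : ∑ m ∈ M', w' m ≤ ∑ m ∈ M', w m :=
            Finset.sum_le_sum fun m _ => hw'le m
          calc ∑ e ∈ E, x e * w e ≤ 2 * d * (∑ m ∈ M', w' m + c) := hcommon
            _ ≤ 2 * d * (∑ m ∈ M', w m + w e0) := by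
                have h2d : (0:ℝ) ≤ 2 * d := by positivity
                have : ∑ m ∈ M', w' m + c ≤ ∑ m ∈ M', w m + w e0 := by
                  rw [← hc]; linarith
                nlinarith
            _ = 2 * d * (w e0 + ∑ m ∈ M', w m) := by ring
      · -- some member of M' already meets e0
        push_neg at hA
        obtain ⟨m0, hm0M, hm0meet⟩ := hA
        refine ⟨M', fun m hm => hE'sub (hM'mem m hm), hM'disj, ?_⟩
        have hm0E' : m0 ∈ E' := hM'mem m0 hm0M
        have hm0w : 0 < w' m0 := (Finset.mem_filter.mp hm0E').2
        have hm0eq : w m0 = w' m0 + c := by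
          have h1 : w' m0 = max (w m0 - c) 0 := by
            simp only [hw']
            rw [if_pos hm0meet]
          have h2 : w' m0 = w m0 - c := by
            rcases max_cases (w m0 - c) 0 with ⟨h, _⟩ | ⟨h, hle⟩
            · rw [h1, h]
            · exfalso; rw [h1, h] at hm0w; exact lt_irrefl _ hm0w
          linarith
        have hge : ∑ m ∈ M', w' m + c ≤ ∑ m ∈ M', w m := by
          have : ∀ m ∈ M', w' m + (if m = m0 then c else 0) ≤ w m := by
            intro m hm
            by_cases h : m = m0
            · subst h; rw [if_pos rfl]; linarith [hm0eq]
            · rw [if_neg h]; simpa using hw'le m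
          calc ∑ m ∈ M', w' m + c
              = ∑ m ∈ M', (w' m + if m = m0 then c else 0) := by
                rw [Finset.sum_add_distrib]
                congr 1
                rw [Finset.sum_ite_eq' M' m0 (fun _ => c), if_pos hm0M]
            _ ≤ ∑ m ∈ M', w m := Finset.sum_le_sum this
        calc ∑ e ∈ E, x e * w e ≤ 2 * d * (∑ m ∈ M', w' m + c) := hcommon
          _ ≤ 2 * d * ∑ m ∈ M', w m := by
              have h2d : (0:ℝ) ≤ 2 * d := by positivity
              nlinarith
    · -- x vanishes on E
      refine ⟨∅, by simp, by simp, ?_⟩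
      have : ∀ e ∈ E, x e * w e = 0 := by
        intro e he
        have : x e = 0 := by
          by_contra h
          exact hSne ⟨e, Finset.mem_filter.mpr ⟨he, h⟩⟩
        rw [this, zero_mul]
      rw [Finset.sum_congr rfl this]
      simp


/-- A balanced finite hypergraph of discrete `d`-intervals on `[k]` (one
admitting a perfect fractional matching `f`) contains a matching `M` with
`∑_{m ∈ M} |m| ≥ k/(2d)`. -/
theorem exists_matching_of_balanced_discrete (d k : ℕ) (hd : 1 ≤ d)
    (H : Set (Set ℕ)) (hfin : H.Finite)
    (hH : ∀ e ∈ H, IsDiscreteDInterval d k e)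
    (f : Set ℕ → ℝ) (hf0 : ∀ e, 0 ≤ f e) (hfs : ∀ e, f e ≠ 0 → e ∈ H)
    (hperf : ∀ v ∈ Set.Icc 1 k, ∑ᶠ e ∈ {e : Set ℕ | v ∈ e}, f e = 1) :
    ∃ M : Finset (Set ℕ), ↑M ⊆ H ∧
      (M : Set (Set ℕ)).PairwiseDisjoint id ∧
      (k : ℝ) / (2 * d) ≤ ∑ e ∈ M, (e.ncard : ℝ) := by
  classical
  set E := hfin.toFinset.filter (fun e => e.Nonempty) with hE
  have hEH : ∀ e ∈ E, e ∈ H := by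
    intro e he
    rw [hE, Finset.mem_filter, Set.Finite.mem_toFinset] at he
    exact he.1
  have hEprops : ∀ e ∈ E, e ⊆ Set.Icc 1 k ∧ e.Nonempty ∧ {v ∈ e | v - 1 ∉ e}.ncard ≤ d := by
    intro e he
    have h1 := hH e (hEH e he)
    have h2 : e.Nonempty := (Finset.mem_filter.mp he).2
    exact ⟨h1.1, h2, lset_ncard_le h1⟩
  set x : Set ℕ → ℝ := fun e => if e ∈ E then f e else 0 with hx
  have hx0 : ∀ e, 0 ≤ x e := by
    intro e; simp only [hx]; split
    · exact hf0 e
    · exact le_rfl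
  have hxs : ∀ e, e ∉ E → x e = 0 := by
    intro e he; simp only [hx]; rw [if_neg he]
  have hcovE : ∀ v ∈ Set.Icc 1 k, ∑ e ∈ E.filter (fun e => v ∈ e), x e = 1 := by
    intro v hv
    have h1 : ∑ᶠ e ∈ {e : Set ℕ | v ∈ e}, f e = ∑ e ∈ E.filter (fun e => v ∈ e), f e := by
      refine finsum_mem_eq_sum_of_subset f ?_ ?_
      · rintro e ⟨hve, hfe⟩
        rw [Finset.coe_filter, Set.mem_setOf_eq]
        refine ⟨?_, hve⟩
        rw [hE, Finset.mem_filter, Set.Finite.mem_toFinset]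
        exact ⟨hfs e hfe, ⟨v, hve⟩⟩
      · intro e he
        rw [Finset.coe_filter, Set.mem_setOf_eq] at he
        exact he.2
    have h2 : ∑ e ∈ E.filter (fun e => v ∈ e), f e = ∑ e ∈ E.filter (fun e => v ∈ e), x e := by
      refine Finset.sum_congr rfl fun e he => ?_
      simp only [hx]
      rw [if_pos (Finset.mem_of_mem_filter e he)]
    rw [← h2, ← h1]
    exact hperf v hv
  obtain ⟨M, hMmem, hMdisj, hMsum⟩ := thmA d k E.card E x (fun e => (e.ncard : ℝ)) le_rfl
    hEprops hx0 hxs (fun e => by positivity)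
    (fun v hv => le_of_eq (hcovE v hv))
  refine ⟨M, ?_, hMdisj, ?_⟩
  · intro m hm
    exact hEH m (hMmem m hm)
  · -- k ≤ ∑ x e * ncard e
    have hkey : (k : ℝ) = ∑ e ∈ E, x e * (e.ncard : ℝ) := by
      have hinner : ∀ e ∈ E, (e.ncard : ℝ) = ((Finset.Icc 1 k).filter (fun v => v ∈ e)).card := by
        intro e he
        have hsub := (hEprops e he).1
        have hcoe : e = ↑((Finset.Icc 1 k).filter (fun v => v ∈ e)) := by
          ext v
          simp only [Finset.coe_filter, Set.mem_setOf_eq, Finset.mem_Icc]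
          constructor
          · intro hv
            have := hsub hv
            rw [Set.mem_Icc] at this
            exact ⟨⟨this.1, this.2⟩, hv⟩
          · rintro ⟨-, hv⟩; exact hv
        have h := Set.ncard_coe_finset ((Finset.Icc 1 k).filter (fun v => v ∈ e))
        rw [← hcoe] at h
        exact_mod_cast h
      calc (k : ℝ) = ∑ v ∈ Finset.Icc 1 k, (1:ℝ) := by
            rw [Finset.sum_const, Nat.card_Icc]
            simp
        _ = ∑ v ∈ Finset.Icc 1 k, ∑ e ∈ E.filter (fun e => v ∈ e), x e := by
            refine Finset.sum_congr rfl fun v hv => ?_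
            rw [Finset.mem_Icc] at hv
            exact (hcovE v (Set.mem_Icc.mpr ⟨hv.1, hv.2⟩)).symm
        _ = ∑ v ∈ Finset.Icc 1 k, ∑ e ∈ E, if v ∈ e then x e else 0 := by
            refine Finset.sum_congr rfl fun v _ => ?_
            rw [Finset.sum_filter]
        _ = ∑ e ∈ E, ∑ v ∈ Finset.Icc 1 k, if v ∈ e then x e else 0 := Finset.sum_comm
        _ = ∑ e ∈ E, x e * (e.ncard : ℝ) := by
            refine Finset.sum_congr rfl fun e he => ?_
            rw [hinner e he, ← Finset.sum_filter, Finset.sum_const]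
            simp [mul_comm]
    have hfin2 : (k : ℝ) ≤ 2 * d * ∑ e ∈ M, (e.ncard : ℝ) := by
      rw [hkey]; exact hMsum
    have h2d : (0:ℝ) < 2 * d := by
      have : (1:ℝ) ≤ d := by exact_mod_cast hd
      linarith
    rw [div_le_iff₀ h2d]
    linarith
end

section
/- Let d ≥ 1 and α > 0, and suppose that every finite hypergraph G of d-intervals satisfies τ*_ℓ(G) ≤ α d·ν_ℓ(G), where ℓ(h) denotes the total length of the d-interval h. Then every finite hypergraph H of d-intervals and every weight system w : E(H) → ℕ satisfy τ_w(H) ≤ α d²·ν_w(H). -/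
open MeasureTheory

/-- A `d`-interval: a union of at most `d` pairwise disjoint closed intervals
on the real line. -/
def IsDInterval (d : ℕ) (h : Set ℝ) : Prop :=
  ∃ (n : ℕ) (a b : Fin n → ℝ), n ≤ d ∧ (∀ i, a i ≤ b i) ∧
    (Set.univ : Set (Fin n)).PairwiseDisjoint (fun i => Set.Icc (a i) (b i)) ∧
    h = ⋃ i, Set.Icc (a i) (b i)

/-- The weighted matching number for a real-valued weight system: the supremum
of `∑_{e ∈ M} w e` over matchings `M` in `H`. -/
noncomputable def nuWR {α : Type*} (H : Set (Set α)) (w : Set α → ℝ) : ℝ :=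
  sSup {t | ∃ M : Finset (Set α), ↑M ⊆ H ∧
    (M : Set (Set α)).PairwiseDisjoint id ∧ t = ∑ e ∈ M, w e}

/-- The fractional weighted covering number for a real-valued weight system:
the infimum of `∑ₓ g x` over finitely supported nonnegative `g : α → ℝ` with
`∑_{x ∈ e} g x ≥ w e` for every edge `e`. -/
noncomputable def tauStarWR {α : Type*} (H : Set (Set α)) (w : Set α → ℝ) : ℝ :=
  sInf {t | ∃ g : α → ℝ, (Function.support g).Finite ∧ (∀ x, 0 ≤ g x) ∧
    (∀ e ∈ H, w e ≤ ∑ᶠ x ∈ e, g x) ∧ t = ∑ᶠ x, g x}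

/-- The weighted covering number `τ_w` for `w : E → ℕ`. -/
noncomputable def tauW {α : Type*} (H : Set (Set α)) (w : Set α → ℕ) : ℕ :=
  sInf {m | ∃ g : α → ℕ, (Function.support g).Finite ∧
    (∀ e ∈ H, w e ≤ ∑ᶠ x ∈ e, g x) ∧ m = ∑ᶠ x, g x}

/-- The total length of a `d`-interval: the Lebesgue measure of the set,
i.e. the sum of the lengths of its components. -/
noncomputable def totalLength (h : Set ℝ) : ℝ := (volume h).toReal

open MeasureTheory Set Function
open scoped Classical

section Helpers
variable {M : Type*} [AddCommMonoid M]

lemma finsum_mem_eq_sum_aux (f : ℝ → M) (hf : (Function.support f).Finite) (s : Set ℝ)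
    (F : Finset ℝ) (h1 : ∀ x, f x ≠ 0 → x ∈ s → x ∈ F) (h2 : ∀ x ∈ F, x ∈ s) :
    ∑ᶠ x ∈ s, f x = ∑ x ∈ F, f x := by
  rw [finsum_mem_eq_sum_of_inter_support_eq f
    (t := F.filter (fun x => f x ≠ 0)) (by
      ext x
      simp only [Set.mem_inter_iff, Function.mem_support, Finset.coe_filter, Set.mem_setOf_eq,
        Finset.mem_coe]
      constructor
      · rintro ⟨hs, hne⟩; exact ⟨⟨h1 x hne hs, hne⟩, hne⟩
      · rintro ⟨⟨hF, hne⟩, _⟩; exact ⟨h2 x hF, hne⟩)]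
  apply Finset.sum_subset
  · intro x hx; exact (Finset.mem_filter.mp hx).1
  · intro x _ hx
    by_contra hne
    exact hx (Finset.mem_filter.mpr ⟨‹x ∈ F›, hne⟩)

end Helpers

lemma icc_disj_order {a₁ b₁ a₂ b₂ : ℝ} (h₁ : a₁ ≤ b₁) (h₂ : a₂ ≤ b₂)
    (h : Disjoint (Set.Icc a₁ b₁) (Set.Icc a₂ b₂)) : b₁ < a₂ ∨ b₂ < a₁ := by
  by_contra hc
  push_neg at hc
  obtain ⟨hle₁, hle₂⟩ := hc
  have : max a₁ a₂ ∈ Set.Icc a₁ b₁ ∩ Set.Icc a₂ b₂ := by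
    constructor <;> constructor
    · exact le_max_left _ _
    · exact max_le h₁ hle₁
    · exact le_max_right _ _
    · exact max_le hle₂ h₂
  exact (h.ne_of_mem this.1 this.2) rfl

lemma totalLength_iUnion {n : ℕ} (a b : Fin n → ℝ) (hab : ∀ i, a i ≤ b i)
    (hd : (Set.univ : Set (Fin n)).PairwiseDisjoint (fun i => Set.Icc (a i) (b i))) :
    totalLength (⋃ i, Set.Icc (a i) (b i)) = ∑ i, (b i - a i) := by
  have hpd : Pairwise (Function.onFun Disjoint (fun i => Set.Icc (a i) (b i))) := by
    intro i j hij
    exact hd (Set.mem_univ i) (Set.mem_univ j) hij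
  rw [totalLength, measure_iUnion hpd (fun i => measurableSet_Icc)]
  rw [tsum_fintype]
  have : ∀ i : Fin n, volume (Set.Icc (a i) (b i)) = ENNReal.ofReal (b i - a i) := by
    intro i; rw [Real.volume_Icc]
  rw [Finset.sum_congr rfl (fun i _ => this i)]
  rw [ENNReal.toReal_sum (by intro i _; exact ENNReal.ofReal_ne_top)]
  exact Finset.sum_congr rfl (fun i _ => ENNReal.toReal_ofReal (by linarith [hab i]))

section Blow
open Set Function
open scoped Classical

noncomputable def Lf (ε : ℝ) (S : Finset ℝ) (m : ℝ → ℝ) (x : ℝ) : ℝ :=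
  ε * x + ∑ y ∈ S.filter (fun y => y < x), m y

noncomputable def Rf (ε : ℝ) (S : Finset ℝ) (m : ℝ → ℝ) (x : ℝ) : ℝ :=
  ε * x + ∑ y ∈ S.filter (fun y => y ≤ x), m y

noncomputable def pif (ε : ℝ) (S : Finset ℝ) (m : ℝ → ℝ) (y : ℝ) : ℝ :=
  sSup {x | Lf ε S m x ≤ y}

variable {ε : ℝ} {S : Finset ℝ} {m : ℝ → ℝ}

lemma Lf_mono (hε : 0 < ε) (hm : ∀ x, 0 ≤ m x) {x x' : ℝ} (h : x ≤ x') : Lf ε S m x ≤ Lf ε S m x' := by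
  unfold Lf
  have h1 : ε * x ≤ ε * x' := by nlinarith
  have h2 : ∑ y ∈ S.filter (fun y => y < x), m y ≤ ∑ y ∈ S.filter (fun y => y < x'), m y := by
    apply Finset.sum_le_sum_of_subset_of_nonneg
    · intro y hy
      simp only [Finset.mem_filter] at hy ⊢
      exact ⟨hy.1, lt_of_lt_of_le hy.2 h⟩
    · intro y _ _; exact hm y
  linarith

lemma Lf_strictMono (hε : 0 < ε) (hm : ∀ x, 0 ≤ m x) {x x' : ℝ} (h : x < x') : Lf ε S m x < Lf ε S m x' := by
  unfold Lf
  have h1 : ε * x < ε * x' := by nlinarith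
  have h2 : ∑ y ∈ S.filter (fun y => y < x), m y ≤ ∑ y ∈ S.filter (fun y => y < x'), m y := by
    apply Finset.sum_le_sum_of_subset_of_nonneg
    · intro y hy
      simp only [Finset.mem_filter] at hy ⊢
      exact ⟨hy.1, lt_trans hy.2 h⟩
    · intro y _ _; exact hm y
  linarith

lemma Lf_le_Rf (hm : ∀ x, 0 ≤ m x) (x : ℝ) : Lf ε S m x ≤ Rf ε S m x := by
  unfold Lf Rf
  have : ∑ y ∈ S.filter (fun y => y < x), m y ≤ ∑ y ∈ S.filter (fun y => y ≤ x), m y := by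
    apply Finset.sum_le_sum_of_subset_of_nonneg
    · intro y hy
      simp only [Finset.mem_filter] at hy ⊢
      exact ⟨hy.1, le_of_lt hy.2⟩
    · intro y _ _; exact hm y
  linarith

lemma Rf_lt_Lf (hε : 0 < ε) (hm : ∀ x, 0 ≤ m x) {x x' : ℝ} (h : x < x') : Rf ε S m x < Lf ε S m x' := by
  unfold Lf Rf
  have h1 : ε * x < ε * x' := by nlinarith
  have h2 : ∑ y ∈ S.filter (fun y => y ≤ x), m y ≤ ∑ y ∈ S.filter (fun y => y < x'), m y := by
    apply Finset.sum_le_sum_of_subset_of_nonneg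
    · intro y hy
      simp only [Finset.mem_filter] at hy ⊢
      exact ⟨hy.1, lt_of_le_of_lt hy.2 h⟩
    · intro y _ _; exact hm y
  linarith

lemma Lf_set_nonempty (hε : 0 < ε) (hm : ∀ x, 0 ≤ m x) (y : ℝ) : {x | Lf ε S m x ≤ y}.Nonempty := by
  refine ⟨(y - ∑ z ∈ S, m z) / ε, ?_⟩
  have hM : (0:ℝ) ≤ ∑ z ∈ S, m z := Finset.sum_nonneg (fun z _ => hm z)
  have hsub : ∑ z ∈ S.filter (fun z => z < (y - ∑ z ∈ S, m z) / ε), m z ≤ ∑ z ∈ S, m z := by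
    apply Finset.sum_le_sum_of_subset_of_nonneg (Finset.filter_subset _ _)
    intro z _ _; exact hm z
  simp only [Set.mem_setOf_eq, Lf]
  have : ε * ((y - ∑ z ∈ S, m z) / ε) = y - ∑ z ∈ S, m z := by field_simp
  rw [this]; linarith

lemma Lf_set_bddAbove (hε : 0 < ε) (hm : ∀ x, 0 ≤ m x) (y : ℝ) : BddAbove {x | Lf ε S m x ≤ y} := by
  refine ⟨y / ε, ?_⟩
  intro x hx
  simp only [Set.mem_setOf_eq, Lf] at hx
  have : (0:ℝ) ≤ ∑ z ∈ S.filter (fun z => z < x), m z :=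
    Finset.sum_nonneg (fun z _ => hm z)
  rw [le_div_iff₀ hε]
  nlinarith

lemma pif_mem (hε : 0 < ε) (hm : ∀ x, 0 ≤ m x) {a b y : ℝ} (hab : a ≤ b) (h1 : Lf ε S m a ≤ y) (h2 : y ≤ Rf ε S m b) :
    pif ε S m y ∈ Set.Icc a b := by
  constructor
  · exact le_csSup (Lf_set_bddAbove hε hm y) h1
  · apply csSup_le (Lf_set_nonempty hε hm y)
    intro x hx
    by_contra hbx
    push_neg at hbx
    have := Rf_lt_Lf (S := S) hε hm hbx
    simp only [Set.mem_setOf_eq] at hx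
    linarith

lemma mem_Icc_iff_Lf (hε : 0 < ε) (hm : ∀ x, 0 ≤ m x) {a b z : ℝ} (hab : a ≤ b) :
    z ∈ Set.Icc a b ↔ Lf ε S m z ∈ Set.Icc (Lf ε S m a) (Rf ε S m b) := by
  constructor
  · rintro ⟨h1, h2⟩
    exact ⟨Lf_mono hε hm h1, le_trans (Lf_mono hε hm h2) (Lf_le_Rf hm b)⟩
  · rintro ⟨h1, h2⟩
    constructor
    · by_contra h; push_neg at h
      have := Lf_strictMono (S := S) hε hm h
      linarith
    · by_contra h; push_neg at h
      have := Rf_lt_Lf (S := S) hε hm h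
      linarith

end Blow

section EfSec
open MeasureTheory Set Function
open scoped Classical

noncomputable def dRep (d : ℕ) (e : Set ℝ) : Σ n : ℕ, (Fin n → ℝ) × (Fin n → ℝ) :=
  if h : IsDInterval d e then ⟨h.choose, h.choose_spec.choose, h.choose_spec.choose_spec.choose⟩
  else ⟨0, Fin.elim0, Fin.elim0⟩

lemma dRep_spec {d : ℕ} {e : Set ℝ} (h : IsDInterval d e) :
    (dRep d e).1 ≤ d ∧ (∀ i, (dRep d e).2.1 i ≤ (dRep d e).2.2 i) ∧
    (Set.univ : Set (Fin (dRep d e).1)).PairwiseDisjoint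
      (fun i => Set.Icc ((dRep d e).2.1 i) ((dRep d e).2.2 i)) ∧
    e = ⋃ i, Set.Icc ((dRep d e).2.1 i) ((dRep d e).2.2 i) := by
  have hh : dRep d e = ⟨h.choose, h.choose_spec.choose, h.choose_spec.choose_spec.choose⟩ := by
    simp only [dRep, dif_pos h]
  rw [hh]
  exact h.choose_spec.choose_spec.choose_spec

noncomputable def Ef (ε : ℝ) (S : Finset ℝ) (m : ℝ → ℝ) (d : ℕ) (e : Set ℝ) : Set ℝ :=
  ⋃ i, Set.Icc (Lf ε S m ((dRep d e).2.1 i)) (Rf ε S m ((dRep d e).2.2 i))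

lemma Icc_disjoint_of_lt {p q r s : ℝ} (h : q < r) :
    Disjoint (Set.Icc p q) (Set.Icc r s) := by
  rw [Set.disjoint_left]
  rintro x ⟨_, hx2⟩ ⟨hx3, _⟩
  linarith

variable {ε : ℝ} {S : Finset ℝ} {m : ℝ → ℝ} {d : ℕ} {e f : Set ℝ}

lemma Ef_disj (hε : 0 < ε) (hm : ∀ x, 0 ≤ m x) (h : IsDInterval d e) :
    (Set.univ : Set (Fin (dRep d e).1)).PairwiseDisjoint
      (fun i => Set.Icc (Lf ε S m ((dRep d e).2.1 i)) (Rf ε S m ((dRep d e).2.2 i))) := by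
  obtain ⟨hnd, hab, hdisj, he⟩ := dRep_spec h
  intro i _ j _ hij
  rcases icc_disj_order (hab i) (hab j) (hdisj (Set.mem_univ i) (Set.mem_univ j) hij) with hc | hc
  · exact Icc_disjoint_of_lt (Rf_lt_Lf hε hm hc)
  · exact (Icc_disjoint_of_lt (Rf_lt_Lf hε hm hc)).symm

lemma Ef_isD (hε : 0 < ε) (hm : ∀ x, 0 ≤ m x) (h : IsDInterval d e) :
    IsDInterval d (Ef ε S m d e) := by
  obtain ⟨hnd, hab, hdisj, he⟩ := dRep_spec h
  exact ⟨(dRep d e).1, fun i => Lf ε S m ((dRep d e).2.1 i),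
    fun i => Rf ε S m ((dRep d e).2.2 i), hnd,
    fun i => le_trans (Lf_mono hε hm (hab i)) (Lf_le_Rf hm _),
    Ef_disj hε hm h, rfl⟩

lemma Ef_mem (hε : 0 < ε) (hm : ∀ x, 0 ≤ m x) (h : IsDInterval d e) (z : ℝ) :
    z ∈ e ↔ Lf ε S m z ∈ Ef ε S m d e := by
  obtain ⟨hnd, hab, hdisj, he⟩ := dRep_spec h
  rw [Ef]
  conv_lhs => rw [he]
  simp only [Set.mem_iUnion]
  exact exists_congr (fun i => mem_Icc_iff_Lf hε hm (hab i))

lemma Ef_nonempty (hε : 0 < ε) (hm : ∀ x, 0 ≤ m x) (h : IsDInterval d e)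
    (hne : e.Nonempty) : (Ef ε S m d e).Nonempty := by
  obtain ⟨z, hz⟩ := hne
  exact ⟨Lf ε S m z, (Ef_mem hε hm h z).mp hz⟩

lemma Ef_pi (hε : 0 < ε) (hm : ∀ x, 0 ≤ m x) (h : IsDInterval d e) {y : ℝ}
    (hy : y ∈ Ef ε S m d e) : pif ε S m y ∈ e := by
  obtain ⟨hnd, hab, hdisj, he⟩ := dRep_spec h
  rw [Ef] at hy
  simp only [Set.mem_iUnion] at hy
  obtain ⟨i, hy1, hy2⟩ := hy
  rw [he]
  exact Set.mem_iUnion.mpr ⟨i, pif_mem hε hm (hab i) hy1 hy2⟩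

lemma Ef_inj (hε : 0 < ε) (hm : ∀ x, 0 ≤ m x) (h : IsDInterval d e)
    (h' : IsDInterval d f) (heq : Ef ε S m d e = Ef ε S m d f) : e = f := by
  ext z
  rw [Ef_mem hε hm h z, Ef_mem hε hm h' z, heq]

lemma Ef_inter (hε : 0 < ε) (hm : ∀ x, 0 ≤ m x) (h : IsDInterval d e)
    (h' : IsDInterval d f) (hne : (e ∩ f).Nonempty) :
    (Ef ε S m d e ∩ Ef ε S m d f).Nonempty := by
  obtain ⟨z, hz1, hz2⟩ := hne
  exact ⟨Lf ε S m z, (Ef_mem hε hm h z).mp hz1, (Ef_mem hε hm h' z).mp hz2⟩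

lemma Ef_len (hε : 0 < ε) (hm : ∀ x, 0 ≤ m x) (h : IsDInterval d e) :
    totalLength (Ef ε S m d e) =
      ε * totalLength e + ∑ y ∈ S.filter (fun y => y ∈ e), m y := by
  obtain ⟨hnd, hab, hdisj, he⟩ := dRep_spec h
  have hab' : ∀ i, Lf ε S m ((dRep d e).2.1 i) ≤ Rf ε S m ((dRep d e).2.2 i) :=
    fun i => le_trans (Lf_mono hε hm (hab i)) (Lf_le_Rf hm _)
  rw [Ef, totalLength_iUnion _ _ hab' (Ef_disj hε hm h)]
  have hlen : totalLength e = ∑ i, ((dRep d e).2.2 i - (dRep d e).2.1 i) := by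
    conv_lhs => rw [he]
    exact totalLength_iUnion _ _ hab hdisj
  have hterm : ∀ i : Fin (dRep d e).1,
      Rf ε S m ((dRep d e).2.2 i) - Lf ε S m ((dRep d e).2.1 i) =
      ε * ((dRep d e).2.2 i - (dRep d e).2.1 i) +
        ∑ y ∈ S.filter (fun y => y ∈ Set.Icc ((dRep d e).2.1 i) ((dRep d e).2.2 i)), m y := by
    intro i
    have hsplit : S.filter (fun y => y ≤ (dRep d e).2.2 i) =
        S.filter (fun y => y < (dRep d e).2.1 i) ∪
        S.filter (fun y => y ∈ Set.Icc ((dRep d e).2.1 i) ((dRep d e).2.2 i)) := by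
      rw [← Finset.filter_or]
      apply Finset.filter_congr
      intro y _
      simp only [Set.mem_Icc, eq_iff_iff]
      constructor
      · intro hy
        rcases lt_or_ge y ((dRep d e).2.1 i) with hc | hc
        · exact Or.inl hc
        · exact Or.inr ⟨hc, hy⟩
      · rintro (hy | ⟨_, hy⟩)
        · exact le_trans (le_of_lt hy) (hab i)
        · exact hy
    have hdisjf : Disjoint (S.filter (fun y => y < (dRep d e).2.1 i))
        (S.filter (fun y => y ∈ Set.Icc ((dRep d e).2.1 i) ((dRep d e).2.2 i))) := by
      rw [Finset.disjoint_left]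
      intro y hy1 hy2
      simp only [Finset.mem_filter, Set.mem_Icc] at hy1 hy2
      linarith [hy1.2, hy2.2.1]
    rw [Rf, Lf, hsplit, Finset.sum_union hdisjf]
    ring
  rw [Finset.sum_congr rfl (fun i _ => hterm i), Finset.sum_add_distrib, ← Finset.mul_sum,
    ← hlen]
  congr 1
  have hpart : S.filter (fun y => y ∈ e) = Finset.univ.biUnion
      (fun i : Fin (dRep d e).1 =>
        S.filter (fun y => y ∈ Set.Icc ((dRep d e).2.1 i) ((dRep d e).2.2 i))) := by
    ext y
    simp only [Finset.mem_filter, Finset.mem_biUnion, Finset.mem_univ, true_and]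
    conv_lhs => rw [he]
    simp only [Set.mem_iUnion]
    tauto
  rw [hpart, Finset.sum_biUnion]
  intro i _ j _ hij
  simp only [Function.onFun]
  rw [Finset.disjoint_left]
  intro y hy1 hy2
  simp only [Finset.mem_filter] at hy1 hy2
  exact Set.disjoint_left.mp (hdisj (Set.mem_univ i) (Set.mem_univ j) hij) hy1.2 hy2.2

end EfSec

open MeasureTheory Set Function
open scoped Classical

set_option maxHeartbeats 2000000 in
lemma sweep_round (d : ℕ) (hd : 1 ≤ d) (H : Set (Set ℝ))
    (hH : ∀ e ∈ H, IsDInterval d e ∧ e.Nonempty) (w : Set ℝ → ℕ) (g : ℝ → ℝ)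
    (hgf : (Function.support g).Finite) (hg0 : ∀ x, 0 ≤ g x)
    (hgc : ∀ e ∈ H, (w e : ℝ) ≤ ∑ᶠ x ∈ e, g x) :
    (tauW H w : ℝ) ≤ (d : ℝ) * ∑ᶠ x, g x := by
  set S := hgf.toFinset with hS
  set T := ∑ y ∈ S, g y with hT
  have hTf : ∑ᶠ x, g x = T := by rw [hT, hS]; exact finsum_eq_sum g hgf
  have hT0 : (0:ℝ) ≤ T := Finset.sum_nonneg (fun y _ => hg0 y)
  have hd0 : (0:ℝ) < (d:ℝ) := by exact_mod_cast hd
  set Φ : ℝ → ℝ := fun x => ∑ y ∈ S.filter (fun y => y ≤ x), g y with hΦ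
  have hΦ0 : ∀ x, 0 ≤ Φ x := fun x => Finset.sum_nonneg (fun y _ => hg0 y)
  have hΦT : ∀ x, Φ x ≤ T := by
    intro x
    apply Finset.sum_le_sum_of_subset_of_nonneg (Finset.filter_subset _ _)
    intro y _ _; exact hg0 y
  set K := ⌊(d:ℝ) * T⌋₊ with hK
  set p : ℕ → ℝ := fun k =>
    if hk : (S.filter (fun x => (k:ℝ) ≤ (d:ℝ) * Φ x)).Nonempty
    then (S.filter (fun x => (k:ℝ) ≤ (d:ℝ) * Φ x)).min' hk else 0 with hp
  set c : ℝ → ℕ := fun x => ((Finset.Icc 1 K).filter (fun k => p k = x)).card with hc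
  set D := (Finset.Icc 1 K).image p with hD
  have hcsupp : Function.support c ⊆ ↑D := by
    intro x hx
    rw [Function.mem_support, hc] at hx
    obtain ⟨k, hk⟩ := Finset.card_pos.mp (Nat.pos_of_ne_zero hx)
    rw [Finset.mem_filter] at hk
    exact Finset.mem_coe.mpr (Finset.mem_image.mpr ⟨k, hk.1, hk.2⟩)
  have hcfin : (Function.support c).Finite := Set.Finite.subset (D.finite_toSet) hcsupp
  have hctot : ∑ᶠ x, c x = K := by
    rw [finsum_eq_sum_of_support_subset c hcsupp]
    have hfib := Finset.card_eq_sum_card_fiberwise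
      (s := Finset.Icc 1 K) (t := D) (f := p)
      (fun x hx => Finset.mem_image_of_mem p hx)
    rw [Nat.card_Icc, Nat.add_sub_cancel] at hfib
    simp only [hc]
    exact hfib.symm
  -- coverage
  have hccov : ∀ e ∈ H, w e ≤ ∑ᶠ x ∈ e, c x := by
    intro e he
    rcases Nat.eq_zero_or_pos (w e) with hw0 | hw1
    · rw [hw0]; exact Nat.zero_le _
    obtain ⟨hde, hene⟩ := hH e he
    obtain ⟨n, A, B, hnd, hab, hdisj, hee⟩ := hde
    set Av : Fin n → ℝ := fun i => ∑ y ∈ S.filter (fun y => y < A i), g y with hAv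
    set Bv : Fin n → ℝ := fun i => Φ (B i) with hBv
    have hAv0 : ∀ i, 0 ≤ Av i := fun i => Finset.sum_nonneg (fun y _ => hg0 y)
    have hAvBv : ∀ i, Av i ≤ Bv i := by
      intro i
      apply Finset.sum_le_sum_of_subset_of_nonneg
      · intro y hy
        rw [Finset.mem_filter] at hy ⊢
        exact ⟨hy.1, le_trans (le_of_lt hy.2) (hab i)⟩
      · intro y _ _; exact hg0 y
    have claim1 : ∀ (i : Fin n) (k : ℕ), (d:ℝ) * Av i < k → (k:ℝ) ≤ (d:ℝ) * Bv i →
        k ∈ Finset.Icc 1 K ∧ p k ∈ Set.Icc (A i) (B i) := by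
      intro i k hk1 hk2
      have hk0 : 1 ≤ k := by
        rcases Nat.eq_zero_or_pos k with h0 | h1
        · exfalso; rw [h0] at hk1; push_cast at hk1
          nlinarith [hAv0 i]
        · exact h1
      have hkK : k ≤ K := by
        apply Nat.le_floor
        calc (k:ℝ) ≤ (d:ℝ) * Bv i := hk2
          _ ≤ (d:ℝ) * T := by nlinarith [hΦT (B i)]
      have hfil : (S.filter (fun y => y ≤ B i)).Nonempty := by
        by_contra hf
        rw [Finset.not_nonempty_iff_eq_empty] at hf
        have : Bv i = 0 := by rw [hBv]; simp only [hΦ]; rw [hf]; simp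
        rw [this] at hk2
        have : (k:ℝ) ≥ 1 := by exact_mod_cast hk0
        nlinarith
      set x₀ := (S.filter (fun y => y ≤ B i)).max' hfil with hx₀def
      have hx₀mem := Finset.max'_mem _ hfil
      rw [← hx₀def, Finset.mem_filter] at hx₀mem
      have hfeq : S.filter (fun y => y ≤ x₀) = S.filter (fun y => y ≤ B i) := by
        ext y
        simp only [Finset.mem_filter]
        constructor
        · rintro ⟨hy1, hy2⟩; exact ⟨hy1, le_trans hy2 hx₀mem.2⟩
        · rintro ⟨hy1, hy2⟩
          refine ⟨hy1, ?_⟩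
          rw [hx₀def]
          exact Finset.le_max' (S.filter (fun z => z ≤ B i)) y
            (Finset.mem_filter.mpr ⟨hy1, hy2⟩)
      have hΦx₀ : Φ x₀ = Φ (B i) := by
        simp only [hΦ]
        rw [hfeq]
      have hx₀fil : x₀ ∈ S.filter (fun x => (k:ℝ) ≤ (d:ℝ) * Φ x) := by
        rw [Finset.mem_filter]
        exact ⟨hx₀mem.1, by rw [hΦx₀]; exact hk2⟩
      have hne : (S.filter (fun x => (k:ℝ) ≤ (d:ℝ) * Φ x)).Nonempty := ⟨x₀, hx₀fil⟩
      have hpk : p k = (S.filter (fun x => (k:ℝ) ≤ (d:ℝ) * Φ x)).min' hne := by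
        rw [hp]; exact dif_pos hne
      have hpkfil : p k ∈ S.filter (fun x => (k:ℝ) ≤ (d:ℝ) * Φ x) := by
        rw [hpk]; exact Finset.min'_mem _ hne
      rw [Finset.mem_filter] at hpkfil
      have hpkB : p k ≤ B i := by
        have : p k ≤ x₀ := by rw [hpk]; exact Finset.min'_le _ x₀ hx₀fil
        exact le_trans this hx₀mem.2
      have hpkA : A i ≤ p k := by
        by_contra hcon
        push_neg at hcon
        have hΦle : Φ (p k) ≤ Av i := by
          apply Finset.sum_le_sum_of_subset_of_nonneg
          · intro y hy
            rw [Finset.mem_filter] at hy ⊢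
            exact ⟨hy.1, lt_of_le_of_lt hy.2 hcon⟩
          · intro y _ _; exact hg0 y
        have : (k:ℝ) ≤ (d:ℝ) * Av i := le_trans hpkfil.2 (by nlinarith)
        linarith
      exact ⟨Finset.mem_Icc.mpr ⟨hk0, hkK⟩, Set.mem_Icc.mpr ⟨hpkA, hpkB⟩⟩
    have claim2 : ∀ i : Fin n, Finset.Ioc ⌊(d:ℝ) * Av i⌋₊ ⌊(d:ℝ) * Bv i⌋₊ ⊆
        (Finset.Icc 1 K).filter (fun k => p k ∈ Set.Icc (A i) (B i)) := by
      intro i k hk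
      rw [Finset.mem_Ioc] at hk
      have h1 : (d:ℝ) * Av i < k := by
        have := Nat.lt_floor_add_one ((d:ℝ) * Av i)
        have hcast : (⌊(d:ℝ) * Av i⌋₊ : ℝ) + 1 ≤ k := by exact_mod_cast hk.1
        linarith
      have h2 : (k:ℝ) ≤ (d:ℝ) * Bv i := by
        have hnn : (0:ℝ) ≤ (d:ℝ) * Bv i := by nlinarith [hΦ0 (B i), hAv0 i, hAvBv i]
        calc (k:ℝ) ≤ (⌊(d:ℝ) * Bv i⌋₊ : ℝ) := by exact_mod_cast hk.2
          _ ≤ (d:ℝ) * Bv i := Nat.floor_le hnn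
      obtain ⟨hmem, hicc⟩ := claim1 i k h1 h2
      exact Finset.mem_filter.mpr ⟨hmem, hicc⟩
    -- counting
    have hNcount : ∑ᶠ x ∈ e, c x = ((Finset.Icc 1 K).filter (fun k => p k ∈ e)).card := by
      rw [finsum_mem_eq_sum_aux c hcfin e (F := D.filter (fun x => x ∈ e))
        (by intro x hx hxe
            exact Finset.mem_filter.mpr ⟨Finset.mem_coe.mp (hcsupp hx), hxe⟩)
        (by intro x hx; exact (Finset.mem_filter.mp hx).2)]
      have hfib := Finset.card_eq_sum_card_fiberwise
        (s := (Finset.Icc 1 K).filter (fun k => p k ∈ e)) (t := D.filter (fun x => x ∈ e))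
        (f := p)
        (by intro k hk
            rw [Finset.mem_coe, Finset.mem_filter] at hk
            exact Finset.mem_coe.mpr (Finset.mem_filter.mpr ⟨Finset.mem_image_of_mem p hk.1, hk.2⟩))
      rw [hfib]
      apply Finset.sum_congr rfl
      intro x hx
      rw [Finset.mem_filter] at hx
      simp only [hc]
      congr 1
      rw [Finset.filter_filter]
      apply Finset.filter_congr
      intro k _
      constructor
      · intro h; exact ⟨h ▸ hx.2, h⟩
      · rintro ⟨_, h⟩; exact h
    have hdisjfib : (Set.univ : Set (Fin n)).PairwiseDisjoint
        (fun i => (Finset.Icc 1 K).filter (fun k => p k ∈ Set.Icc (A i) (B i))) := by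
      intro i _ j _ hij
      simp only [Function.onFun]
      rw [Finset.disjoint_left]
      intro k hk1 hk2
      rw [Finset.mem_filter] at hk1 hk2
      exact Set.disjoint_left.mp (hdisj (Set.mem_univ i) (Set.mem_univ j) hij) hk1.2 hk2.2
    have hcardsum : ∑ i, (⌊(d:ℝ) * Bv i⌋₊ - ⌊(d:ℝ) * Av i⌋₊) ≤
        ((Finset.Icc 1 K).filter (fun k => p k ∈ e)).card := by
      calc ∑ i, (⌊(d:ℝ) * Bv i⌋₊ - ⌊(d:ℝ) * Av i⌋₊)
          = ∑ i, (Finset.Ioc ⌊(d:ℝ) * Av i⌋₊ ⌊(d:ℝ) * Bv i⌋₊).card := by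
            apply Finset.sum_congr rfl
            intro i _
            rw [Nat.card_Ioc]
        _ ≤ ∑ i, ((Finset.Icc 1 K).filter (fun k => p k ∈ Set.Icc (A i) (B i))).card := by
            apply Finset.sum_le_sum
            intro i _
            exact Finset.card_le_card (claim2 i)
        _ = (Finset.univ.biUnion (fun i : Fin n =>
              (Finset.Icc 1 K).filter (fun k => p k ∈ Set.Icc (A i) (B i)))).card := by
            rw [Finset.card_biUnion]
            intro i _ j _ hij
            exact hdisjfib (Set.mem_univ i) (Set.mem_univ j) hij
        _ ≤ ((Finset.Icc 1 K).filter (fun k => p k ∈ e)).card := by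
            apply Finset.card_le_card
            intro k hk
            rw [Finset.mem_biUnion] at hk
            obtain ⟨i, _, hk⟩ := hk
            rw [Finset.mem_filter] at hk ⊢
            refine ⟨hk.1, ?_⟩
            rw [hee]
            exact Set.mem_iUnion.mpr ⟨i, hk.2⟩
    have hcov_sum : (w e : ℝ) ≤ ∑ i, (Bv i - Av i) := by
      have heq : ∑ᶠ x ∈ e, g x = ∑ y ∈ S.filter (fun y => y ∈ e), g y := by
        apply finsum_mem_eq_sum_aux g hgf
        · intro x hx hxe
          exact Finset.mem_filter.mpr ⟨hgf.mem_toFinset.mpr hx, hxe⟩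
        · intro x hx; exact (Finset.mem_filter.mp hx).2
      have hterm : ∀ i : Fin n, Bv i - Av i =
          ∑ y ∈ S.filter (fun y => y ∈ Set.Icc (A i) (B i)), g y := by
        intro i
        have hsplit : S.filter (fun y => y ≤ B i) =
            S.filter (fun y => y < A i) ∪
            S.filter (fun y => y ∈ Set.Icc (A i) (B i)) := by
          rw [← Finset.filter_or]
          apply Finset.filter_congr
          intro y _
          simp only [Set.mem_Icc, eq_iff_iff]
          constructor
          · intro hy
            rcases lt_or_ge y (A i) with hcc | hcc
            · exact Or.inl hcc
            · exact Or.inr ⟨hcc, hy⟩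
          · rintro (hy | ⟨_, hy⟩)
            · exact le_trans (le_of_lt hy) (hab i)
            · exact hy
        have hdisjf : Disjoint (S.filter (fun y => y < A i))
            (S.filter (fun y => y ∈ Set.Icc (A i) (B i))) := by
          rw [Finset.disjoint_left]
          intro y hy1 hy2
          rw [Finset.mem_filter] at hy1 hy2
          rw [Set.mem_Icc] at hy2
          linarith [hy1.2, hy2.2.1]
        rw [hBv]
        simp only [hΦ]
        rw [hsplit, Finset.sum_union hdisjf, hAv]
        ring
      have hpart : S.filter (fun y => y ∈ e) = Finset.univ.biUnion
          (fun i : Fin n => S.filter (fun y => y ∈ Set.Icc (A i) (B i))) := by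
        ext y
        simp only [Finset.mem_filter, Finset.mem_biUnion, Finset.mem_univ, true_and]
        conv_lhs => rw [hee]
        simp only [Set.mem_iUnion]
        tauto
      calc (w e : ℝ) ≤ ∑ᶠ x ∈ e, g x := hgc e he
        _ = ∑ y ∈ S.filter (fun y => y ∈ e), g y := heq
        _ = ∑ i, ∑ y ∈ S.filter (fun y => y ∈ Set.Icc (A i) (B i)), g y := by
            rw [hpart, Finset.sum_biUnion]
            intro i _ j _ hij
            simp only [Function.onFun]
            rw [Finset.disjoint_left]
            intro y hy1 hy2
            rw [Finset.mem_filter] at hy1 hy2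
            exact Set.disjoint_left.mp (hdisj (Set.mem_univ i) (Set.mem_univ j) hij) hy1.2 hy2.2
        _ = ∑ i, (Bv i - Av i) := by
            apply Finset.sum_congr rfl
            intro i _
            exact (hterm i).symm
    -- floor arithmetic
    have hn0 : 0 < n := by
      obtain ⟨z, hz⟩ := hene
      rw [hee] at hz
      exact (Set.mem_iUnion.mp hz).choose.pos
    set Ni : Fin n → ℕ := fun i => ⌊(d:ℝ) * Bv i⌋₊ - ⌊(d:ℝ) * Av i⌋₊ with hNi
    have hfl : ∀ i : Fin n, (d:ℝ) * Bv i - (d:ℝ) * Av i - 1 <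
        ((Ni i : ℕ) : ℝ) := by
      intro i
      rw [hNi]
      have hA0 : (0:ℝ) ≤ (d:ℝ) * Av i := by nlinarith [hAv0 i]
      have h1 : (⌊(d:ℝ) * Av i⌋₊ : ℝ) ≤ (d:ℝ) * Av i := Nat.floor_le hA0
      have h2 : (d:ℝ) * Bv i < (⌊(d:ℝ) * Bv i⌋₊ : ℝ) + 1 := Nat.lt_floor_add_one _
      have hmono : ⌊(d:ℝ) * Av i⌋₊ ≤ ⌊(d:ℝ) * Bv i⌋₊ :=
        Nat.floor_mono (by nlinarith [hAvBv i])
      rw [Nat.cast_sub hmono]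
      linarith
    have hNlarge : (d:ℝ) * (w e) - (d:ℝ) < ((∑ i, Ni i : ℕ) : ℝ) := by
      have hcastsum : ((∑ i, Ni i : ℕ) : ℝ) = ∑ i, ((Ni i : ℕ) : ℝ) :=
        Nat.cast_sum Finset.univ Ni
      have hsum : ∑ i, ((d:ℝ) * Bv i - (d:ℝ) * Av i - 1) < ∑ i, ((Ni i : ℕ) : ℝ) := by
        apply Finset.sum_lt_sum_of_nonempty
        · rwa [← Finset.card_pos, Finset.card_univ, Fintype.card_fin]
        · intro i _
          exact hfl i
      have hlow : (d:ℝ) * (w e) - (d:ℝ) ≤ ∑ i, ((d:ℝ) * Bv i - (d:ℝ) * Av i - 1) := by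
        have hexp : ∑ i, ((d:ℝ) * Bv i - (d:ℝ) * Av i - 1) =
            (d:ℝ) * (∑ i, (Bv i - Av i)) - n := by
          rw [Finset.mul_sum, Finset.sum_sub_distrib]
          simp [Finset.card_univ, mul_sub]
        rw [hexp]
        have hn : (n:ℝ) ≤ (d:ℝ) := by exact_mod_cast hnd
        nlinarith [hcov_sum]
      rw [hcastsum]
      linarith
    have hwN : w e ≤ ∑ i, Ni i := by
      have hcast : ((d * (w e - 1) : ℕ) : ℝ) < ((∑ i, Ni i : ℕ) : ℝ) := by
        push_cast [Nat.cast_sub hw1]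
        have h' := hNlarge
        rw [Nat.cast_sum] at h'
        nlinarith [h']
      have hlt : d * (w e - 1) < ∑ i, Ni i := by exact_mod_cast hcast
      have : w e - 1 ≤ d * (w e - 1) := Nat.le_mul_of_pos_left _ (by omega)
      omega
    rw [hNcount]
    exact le_trans hwN hcardsum
  -- conclude
  have htau : tauW H w ≤ K := Nat.sInf_le ⟨c, hcfin, hccov, hctot.symm⟩
  calc (tauW H w : ℝ) ≤ (K : ℝ) := by exact_mod_cast htau
    _ ≤ (d:ℝ) * T := Nat.floor_le (by nlinarith)
    _ = (d:ℝ) * ∑ᶠ x, g x := by rw [hTf]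

open MeasureTheory Set Function
open scoped Classical

lemma le_finsum_mem (f : ℝ → ℝ) (hf : (Function.support f).Finite) (h0 : ∀ x, 0 ≤ f x)
    {x₀ : ℝ} {s : Set ℝ} (hx : x₀ ∈ s) : f x₀ ≤ ∑ᶠ x ∈ s, f x := by
  rw [finsum_mem_eq_sum_aux f hf s (F := hf.toFinset.filter (fun x => x ∈ s))
    (by intro x hxx hxs; exact Finset.mem_filter.mpr ⟨hf.mem_toFinset.mpr hxx, hxs⟩)
    (by intro x hxx; exact (Finset.mem_filter.mp hxx).2)]
  by_cases h : f x₀ = 0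
  · rw [h]; exact Finset.sum_nonneg (fun y _ => h0 y)
  · exact Finset.single_le_sum (fun y _ => h0 y)
      (Finset.mem_filter.mpr ⟨hf.mem_toFinset.mpr h, hx⟩)

lemma coverset_ne (Hs : Set (Set ℝ)) (hfin : Hs.Finite) (hne : ∀ e ∈ Hs, e.Nonempty)
    (wt : Set ℝ → ℝ) :
    {t | ∃ g : ℝ → ℝ, (Function.support g).Finite ∧ (∀ x, 0 ≤ g x) ∧
      (∀ e ∈ Hs, wt e ≤ ∑ᶠ x ∈ e, g x) ∧ t = ∑ᶠ x, g x}.Nonempty := by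
  set pt : Set ℝ → ℝ := fun e => if h : e.Nonempty then h.some else 0 with hpt
  set g₀ : ℝ → ℝ := fun x => ∑ e ∈ hfin.toFinset, (if x = pt e then max (wt e) 0 else 0)
    with hg₀
  have h0 : ∀ x, 0 ≤ g₀ x := by
    intro x
    apply Finset.sum_nonneg
    intro e _
    split
    · exact le_max_right _ _
    · exact le_refl 0
  have hsupp : Function.support g₀ ⊆ ↑(hfin.toFinset.image pt) := by
    intro x hxx
    rw [Function.mem_support] at hxx
    by_contra hcon
    apply hxx
    rw [hg₀]
    apply Finset.sum_eq_zero
    intro e he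
    split
    · next heq =>
        exfalso; apply hcon
        exact Finset.mem_coe.mpr (Finset.mem_image.mpr ⟨e, he, heq.symm⟩)
    · rfl
  have hfinsupp : (Function.support g₀).Finite :=
    Set.Finite.subset (Finset.finite_toSet _) hsupp
  refine ⟨∑ᶠ x, g₀ x, g₀, hfinsupp, h0, ?_, rfl⟩
  intro e he
  have hene : e.Nonempty := hne e he
  have hptmem : pt e ∈ e := by
    rw [hpt]
    simp only [dif_pos hene]
    exact hene.some_mem
  have hval : max (wt e) 0 ≤ g₀ (pt e) := by
    rw [hg₀]
    refine Finset.single_le_sum (f := fun f => if pt e = pt f then max (wt f) 0 else 0)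
      ?_ (hfin.mem_toFinset.mpr he) |>.trans_eq' ?_
    · intro f _
      split
      · exact le_max_right _ _
      · exact le_refl 0
    · simp
  calc wt e ≤ max (wt e) 0 := le_max_left _ _
    _ ≤ g₀ (pt e) := hval
    _ ≤ ∑ᶠ x ∈ e, g₀ x := le_finsum_mem g₀ hfinsupp h0 hptmem

lemma fiber_sum (s : Finset ℝ) (f : ℝ → ℝ) (π : ℝ → ℝ) (P : Set ℝ) :
    ∑ x ∈ (s.image π).filter (fun x => x ∈ P), ∑ y ∈ s.filter (fun y => π y = x), f y
      = ∑ y ∈ s.filter (fun y => π y ∈ P), f y := by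
  rw [← Finset.sum_fiberwise_of_maps_to
      (s := s.filter (fun y => π y ∈ P)) (t := (s.image π).filter (fun x => x ∈ P)) (g := π)
      (by intro y hy
          rw [Finset.mem_filter] at hy
          exact Finset.mem_filter.mpr ⟨Finset.mem_image_of_mem π hy.1, hy.2⟩) f]
  apply Finset.sum_congr rfl
  intro x hx
  rw [Finset.mem_filter] at hx
  congr 1
  rw [Finset.filter_filter]
  apply Finset.filter_congr
  intro y _
  constructor
  · intro h; exact ⟨h ▸ hx.2, h⟩
  · rintro ⟨_, h⟩; exact h

open MeasureTheory Set Function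
open scoped Classical

set_option maxHeartbeats 2000000 in
lemma frac_bound (d : ℕ) (hd : 1 ≤ d) (α : ℝ) (hα : 0 < α)
    (hyp : ∀ G : Set (Set ℝ), G.Finite →
      (∀ e ∈ G, IsDInterval d e ∧ e.Nonempty) →
      tauStarWR G totalLength ≤ α * d * nuWR G totalLength)
    (H : Set (Set ℝ)) (hfin : H.Finite)
    (hH : ∀ e ∈ H, IsDInterval d e ∧ e.Nonempty)
    (w : Set ℝ → ℕ) :
    tauStarWR H (fun e => ((w e : ℕ) : ℝ)) ≤ α * d * (nuW H w : ℝ) := by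
  set wb : Set ℝ → ℝ := fun e => ((w e : ℕ) : ℝ) with hwb
  set CS := {t | ∃ g : ℝ → ℝ, (Function.support g).Finite ∧ (∀ x, 0 ≤ g x) ∧
    (∀ e ∈ H, wb e ≤ ∑ᶠ x ∈ e, g x) ∧ t = ∑ᶠ x, g x} with hCS
  have hCSne : CS.Nonempty := coverset_ne H hfin (fun e he => (hH e he).2) wb
  have hτdef : tauStarWR H wb = sInf CS := rfl
  set τ := tauStarWR H wb with hτ
  set ν : ℝ := (nuW H w : ℝ) with hν
  have hν0 : 0 ≤ ν := Nat.cast_nonneg _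
  set W : ℝ := ∑ e ∈ hfin.toFinset, wb e with hW
  have hW0 : 0 ≤ W := Finset.sum_nonneg (fun e _ => Nat.cast_nonneg _)
  have hWe : ∀ e ∈ H, wb e ≤ W := by
    intro e he
    rw [hW]
    exact Finset.single_le_sum (fun f _ => Nat.cast_nonneg _) (hfin.mem_toFinset.mpr he)
  set N : ℝ := (hfin.toFinset.card : ℝ) with hN
  set Λ : ℝ := ∑ e ∈ hfin.toFinset, totalLength e with hΛ
  have hΛ0 : 0 ≤ Λ := Finset.sum_nonneg (fun e _ => ENNReal.toReal_nonneg)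
  set C : ℝ := W + 2 + α * d * N + α * d * Λ with hC
  have hd0 : (0:ℝ) < (d:ℝ) := by exact_mod_cast hd
  have hαd0 : 0 < α * d := by positivity
  have hC0 : 0 < C := by
    have hN0 : 0 ≤ N := Nat.cast_nonneg _
    rw [hC]; positivity
  -- main estimate for each small t
  have key : ∀ t : ℝ, 0 < t → t ≤ 1 → τ ≤ α * d * ν + C * t := by
    intro t ht ht1
    -- near-optimal cover m
    obtain ⟨tm, htmCS, htmlt⟩ := exists_lt_of_csInf_lt hCSne
      (show sInf CS < τ + t * t by rw [← hτdef]; nlinarith)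
    obtain ⟨m, hmf, hm0, hmc, rfl⟩ := htmCS
    set Sm := hmf.toFinset with hSm
    set mval : Set ℝ → ℝ := fun e => ∑ y ∈ Sm.filter (fun y => y ∈ e), m y with hmval
    have hmvaleq : ∀ e : Set ℝ, ∑ᶠ x ∈ e, m x = mval e := by
      intro e
      apply finsum_mem_eq_sum_aux m hmf
      · intro x hx hxe
        exact Finset.mem_filter.mpr ⟨hmf.mem_toFinset.mpr hx, hxe⟩
      · intro x hx; exact (Finset.mem_filter.mp hx).2
    have hmcov : ∀ e ∈ H, wb e ≤ mval e := by
      intro e he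
      rw [← hmvaleq]
      exact hmc e he
    -- the tight subfamily and blown-up hypergraph
    set Tfin := hfin.toFinset.filter (fun e => mval e ≤ wb e + t) with hTfin
    have hTmem : ∀ e ∈ Tfin, e ∈ H := by
      intro e he
      exact hfin.mem_toFinset.mp (Finset.filter_subset _ _ he)
    set E : Set ℝ → Set ℝ := Ef t Sm m d with hE
    set G : Set (Set ℝ) := ↑(Tfin.image E) with hG
    have hGfin : G.Finite := Finset.finite_toSet _
    have hGedge : ∀ E' ∈ G, IsDInterval d E' ∧ E'.Nonempty := by
      intro E' hE'
      obtain ⟨e, heT, rfl⟩ := Finset.mem_image.mp (Finset.mem_coe.mp hE')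
      obtain ⟨hisD, hene⟩ := hH e (hTmem e heT)
      exact ⟨Ef_isD ht hm0 hisD, Ef_nonempty ht hm0 hisD hene⟩
    have hElen : ∀ e ∈ Tfin, totalLength (E e) = t * totalLength e + mval e := by
      intro e heT
      rw [hE]
      rw [Ef_len ht hm0 (hH e (hTmem e heT)).1]
    -- bound the matching number of G
    have hnuG : nuWR G totalLength ≤ ν + t * N + t * Λ := by
      apply csSup_le
      · exact ⟨0, ∅, by simp, by simp, by simp⟩
      rintro x ⟨M', hM'sub, hM'disj, rfl⟩
      set Mh := Tfin.filter (fun e => E e ∈ M') with hMh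
      have hMhH : ∀ e ∈ Mh, e ∈ H := fun e he => hTmem e (Finset.filter_subset _ _ he)
      have hM'eq : M' = Mh.image E := by
        ext E'
        constructor
        · intro hE'
          obtain ⟨e, heT, rfl⟩ := Finset.mem_image.mp (Finset.mem_coe.mp (hM'sub hE'))
          exact Finset.mem_image_of_mem E (Finset.mem_filter.mpr ⟨heT, hE'⟩)
        · intro hE'
          obtain ⟨e, heMh, rfl⟩ := Finset.mem_image.mp hE'
          exact (Finset.mem_filter.mp heMh).2
      have hinj : ∀ e ∈ Mh, ∀ f ∈ Mh, E e = E f → e = f := by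
        intro e he f hf heq
        exact Ef_inj ht hm0 (hH e (hMhH e he)).1 (hH f (hMhH f hf)).1 heq
      have hsum : ∑ E' ∈ M', totalLength E' = ∑ e ∈ Mh, totalLength (E e) := by
        rw [hM'eq, Finset.sum_image hinj]
      rw [hsum]
      have hMhsub : Mh ⊆ hfin.toFinset := by
        intro e he
        exact hfin.mem_toFinset.mpr (hMhH e he)
      have hbound : ∑ e ∈ Mh, totalLength (E e) ≤
          (∑ e ∈ Mh, wb e) + t * N + t * Λ := by
        have h1 : ∑ e ∈ Mh, totalLength (E e) = ∑ e ∈ Mh, (t * totalLength e + mval e) := by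
          apply Finset.sum_congr rfl
          intro e he
          exact hElen e (Finset.filter_subset _ _ he)
        rw [h1, Finset.sum_add_distrib]
        have h2 : ∑ e ∈ Mh, mval e ≤ ∑ e ∈ Mh, (wb e + t) := by
          apply Finset.sum_le_sum
          intro e he
          exact (Finset.mem_filter.mp (Finset.filter_subset _ _ he : e ∈ Tfin)).2
        have h3 : ∑ e ∈ Mh, (wb e + t) = (∑ e ∈ Mh, wb e) + t * Mh.card := by
          rw [Finset.sum_add_distrib]
          simp [mul_comm]
        have h4 : (Mh.card : ℝ) ≤ N := by
          rw [hN]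
          exact_mod_cast Finset.card_le_card hMhsub
        have h5 : ∑ e ∈ Mh, t * totalLength e ≤ t * Λ := by
          rw [← Finset.mul_sum]
          apply mul_le_mul_of_nonneg_left _ (le_of_lt ht)
          rw [hΛ]
          apply Finset.sum_le_sum_of_subset_of_nonneg hMhsub
          intro e _ _
          exact ENNReal.toReal_nonneg
        nlinarith [ht.le]
      -- matching in H
      have hmatch : (∑ e ∈ Mh, w e : ℕ) ≤ nuW H w := by
        apply le_csSup
        · refine ⟨∑ e ∈ hfin.toFinset, w e, ?_⟩
          rintro x ⟨M, hMsub, hMdisj, rfl⟩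
          apply Finset.sum_le_sum_of_subset
          intro e he
          exact hfin.mem_toFinset.mpr (hMsub he)
        · refine ⟨Mh, ?_, ?_, rfl⟩
          · intro e he; exact hMhH e (Finset.mem_coe.mp he)
          · intro e he f hf hef
            have heMh : e ∈ Mh := Finset.mem_coe.mp he
            have hfMh : f ∈ Mh := Finset.mem_coe.mp hf
            have hEne : E e ≠ E f := fun hcon => hef (hinj e heMh f hfMh hcon)
            have hdisjE := hM'disj
              (Finset.mem_coe.mpr ((Finset.mem_filter.mp heMh).2))
              (Finset.mem_coe.mpr ((Finset.mem_filter.mp hfMh).2)) hEne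
            simp only [Function.onFun, id] at hdisjE ⊢
            rw [Set.disjoint_left]
            intro z hz1 hz2
            have h1 := (Ef_mem (S := Sm) ht hm0 (hH e (hMhH e heMh)).1 z).mp hz1
            have h2 := (Ef_mem (S := Sm) ht hm0 (hH f (hMhH f hfMh)).1 z).mp hz2
            exact Set.disjoint_left.mp hdisjE h1 h2
      have hcast : (∑ e ∈ Mh, wb e) ≤ ν := by
        rw [hν, hwb]
        calc ∑ e ∈ Mh, ((w e : ℕ) : ℝ) = ((∑ e ∈ Mh, w e : ℕ) : ℝ) :=
              (Nat.cast_sum _ _).symm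
          _ ≤ (nuW H w : ℝ) := by exact_mod_cast hmatch
      linarith
    -- apply the hypothesis
    have hhyp := hyp G hGfin hGedge
    have hRB : tauStarWR G totalLength ≤ α * d * (ν + t * N + t * Λ) := by
      apply le_trans hhyp
      apply mul_le_mul_of_nonneg_left hnuG (le_of_lt hαd0)
    -- extract a near-optimal cover of G
    have hGCSne := coverset_ne G hGfin (fun E' hE' => (hGedge E' hE').2) totalLength
    obtain ⟨tg, htgCS, htglt⟩ := exists_lt_of_csInf_lt hGCSne
      (show sInf _ < α * d * (ν + t * N + t * Λ) + t by
        calc sInf _ ≤ α * d * (ν + t * N + t * Λ) := hRB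
          _ < _ := by linarith)
    obtain ⟨g, hgf, hg0, hgc, rfl⟩ := htgCS
    set Sg := hgf.toFinset with hSg
    set π := pif t Sm m with hπ
    set g' : ℝ → ℝ := fun x => ∑ y ∈ Sg.filter (fun y => π y = x), g y with hg'
    have hg'0 : ∀ x, 0 ≤ g' x := by
      intro x
      apply Finset.sum_nonneg
      intro y _
      exact hg0 y
    have hg'supp : Function.support g' ⊆ ↑(Sg.image π) := by
      intro x hx
      rw [Function.mem_support] at hx
      by_contra hcon
      apply hx
      rw [hg']
      apply Finset.sum_eq_zero
      intro y hy
      exfalso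
      apply hcon
      rw [Finset.mem_filter] at hy
      exact Finset.mem_coe.mpr (hy.2 ▸ Finset.mem_image_of_mem π hy.1)
    have hg'fin : (Function.support g').Finite :=
      Set.Finite.subset (Finset.finite_toSet _) hg'supp
    have hg'tot : ∑ᶠ x, g' x = ∑ᶠ y, g y := by
      rw [finsum_eq_sum_of_support_subset g' hg'supp, finsum_eq_sum g hgf]
      rw [hg']
      exact Finset.sum_fiberwise_of_maps_to (fun y hy => Finset.mem_image_of_mem π hy) g
    have hg'cov : ∀ e ∈ Tfin, wb e ≤ ∑ᶠ x ∈ e, g' x := by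
      intro e heT
      have heH : e ∈ H := hTmem e heT
      have heq1 : ∑ᶠ x ∈ e, g' x = ∑ y ∈ Sg.filter (fun y => π y ∈ e), g y := by
        rw [finsum_mem_eq_sum_aux g' hg'fin e (F := (Sg.image π).filter (fun x => x ∈ e))
          (by intro x hx hxe
              exact Finset.mem_filter.mpr ⟨Finset.mem_coe.mp (hg'supp hx), hxe⟩)
          (by intro x hx; exact (Finset.mem_filter.mp hx).2)]
        rw [hg']
        exact fiber_sum Sg g π e
      have hEeG : E e ∈ G := Finset.mem_coe.mpr (Finset.mem_image_of_mem E heT)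
      have heq2 : ∑ y ∈ Sg.filter (fun y => y ∈ E e), g y = ∑ᶠ y ∈ E e, g y := by
        symm
        apply finsum_mem_eq_sum_aux g hgf
        · intro y hy hye
          exact Finset.mem_filter.mpr ⟨hgf.mem_toFinset.mpr hy, hye⟩
        · intro y hy; exact (Finset.mem_filter.mp hy).2
      have hsub : Sg.filter (fun y => y ∈ E e) ⊆ Sg.filter (fun y => π y ∈ e) := by
        intro y hy
        rw [Finset.mem_filter] at hy ⊢
        refine ⟨hy.1, ?_⟩
        rw [hπ]
        exact Ef_pi ht hm0 (hH e heH).1 hy.2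
      calc wb e ≤ mval e := hmcov e heH
        _ ≤ t * totalLength e + mval e := by
            nlinarith [mul_nonneg ht.le (show (0:ℝ) ≤ totalLength e from ENNReal.toReal_nonneg)]
        _ = totalLength (E e) := (hElen e heT).symm
        _ ≤ ∑ᶠ y ∈ E e, g y := hgc (E e) hEeG
        _ = ∑ y ∈ Sg.filter (fun y => y ∈ E e), g y := heq2.symm
        _ ≤ ∑ y ∈ Sg.filter (fun y => π y ∈ e), g y :=
            Finset.sum_le_sum_of_subset_of_nonneg hsub (fun y _ _ => hg0 y)
        _ = ∑ᶠ x ∈ e, g' x := heq1.symm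
    -- mix the two covers
    set lam := t / (W + t) with hlam
    have hWt0 : 0 < W + t := by linarith
    have hlam0 : 0 < lam := by rw [hlam]; positivity
    have hlam1 : lam ≤ 1 := by
      rw [hlam, div_le_one hWt0]; linarith
    set gmix : ℝ → ℝ := fun x => (1 - lam) * m x + lam * g' x with hgmix
    have hgmix0 : ∀ x, 0 ≤ gmix x := by
      intro x
      have := hm0 x
      have := hg'0 x
      rw [hgmix]
      dsimp only
      nlinarith
    have hgmixsupp : Function.support gmix ⊆ ↑(Sm ∪ Sg.image π) := by
      intro x hx
      rw [Function.mem_support] at hx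
      by_contra hcon
      rw [Finset.coe_union, Set.mem_union] at hcon
      push_neg at hcon
      have hm0x : m x = 0 := by
        by_contra hmx
        exact hcon.1 (Finset.mem_coe.mpr (hmf.mem_toFinset.mpr hmx))
      have hg'0x : g' x = 0 := by
        by_contra hgx
        exact hcon.2 (hg'supp hgx)
      apply hx
      rw [hgmix]
      dsimp only
      rw [hm0x, hg'0x]
      ring
    have hgmixfin : (Function.support gmix).Finite :=
      Set.Finite.subset (Finset.finite_toSet _) hgmixsupp
    -- finsum decompositions over a common finset
    have hsplit : ∀ s : Set ℝ,
        ∑ᶠ x ∈ s, gmix x = (1 - lam) * (∑ᶠ x ∈ s, m x) + lam * (∑ᶠ x ∈ s, g' x) := by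
      intro s
      set F := (Sm ∪ Sg.image π).filter (fun x => x ∈ s) with hF
      have h1 : ∑ᶠ x ∈ s, gmix x = ∑ x ∈ F, gmix x := by
        apply finsum_mem_eq_sum_aux gmix hgmixfin
        · intro x hx hxs
          exact Finset.mem_filter.mpr ⟨Finset.mem_coe.mp (hgmixsupp hx), hxs⟩
        · intro x hx; exact (Finset.mem_filter.mp hx).2
      have h2 : ∑ᶠ x ∈ s, m x = ∑ x ∈ F, m x := by
        apply finsum_mem_eq_sum_aux m hmf
        · intro x hx hxs
          refine Finset.mem_filter.mpr ⟨?_, hxs⟩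
          exact Finset.mem_union_left _ (hmf.mem_toFinset.mpr hx)
        · intro x hx; exact (Finset.mem_filter.mp hx).2
      have h3 : ∑ᶠ x ∈ s, g' x = ∑ x ∈ F, g' x := by
        apply finsum_mem_eq_sum_aux g' hg'fin
        · intro x hx hxs
          refine Finset.mem_filter.mpr ⟨?_, hxs⟩
          exact Finset.mem_union_right _ (Finset.mem_coe.mp (hg'supp hx))
        · intro x hx; exact (Finset.mem_filter.mp hx).2
      rw [h1, h2, h3, hgmix]
      dsimp only
      rw [Finset.sum_add_distrib, Finset.mul_sum, Finset.mul_sum]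
    have hgmixtot : ∑ᶠ x, gmix x = (1 - lam) * (∑ᶠ x, m x) + lam * (∑ᶠ x, g' x) := by
      have h1 : ∑ᶠ x, gmix x = ∑ x ∈ Sm ∪ Sg.image π, gmix x :=
        finsum_eq_sum_of_support_subset gmix hgmixsupp
      have h2 : ∑ᶠ x, m x = ∑ x ∈ Sm ∪ Sg.image π, m x := by
        apply finsum_eq_sum_of_support_subset m
        intro x hx
        exact Finset.mem_coe.mpr (Finset.mem_union_left _ (hmf.mem_toFinset.mpr hx))
      have h3 : ∑ᶠ x, g' x = ∑ x ∈ Sm ∪ Sg.image π, g' x := by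
        apply finsum_eq_sum_of_support_subset g'
        intro x hx
        exact Finset.mem_coe.mpr (Finset.mem_union_right _ (Finset.mem_coe.mp (hg'supp hx)))
      rw [h1, h2, h3, hgmix]
      dsimp only
      rw [Finset.sum_add_distrib, Finset.mul_sum, Finset.mul_sum]
    have hgmixcov : ∀ e ∈ H, wb e ≤ ∑ᶠ x ∈ e, gmix x := by
      intro e he
      rw [hsplit e]
      by_cases hcase : mval e ≤ wb e + t
      · have heT : e ∈ Tfin := Finset.mem_filter.mpr ⟨hfin.mem_toFinset.mpr he, hcase⟩
        have h1 := hmc e he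
        have h2 := hg'cov e heT
        nlinarith
      · push_neg at hcase
        have h1 : wb e + t ≤ ∑ᶠ x ∈ e, m x := by
          rw [hmvaleq]
          linarith
        have h2 : 0 ≤ ∑ᶠ x ∈ e, g' x := by
          rw [finsum_mem_eq_sum_aux g' hg'fin e (F := (Sg.image π).filter (fun x => x ∈ e))
            (by intro x hx hxe
                exact Finset.mem_filter.mpr ⟨Finset.mem_coe.mp (hg'supp hx), hxe⟩)
            (by intro x hx; exact (Finset.mem_filter.mp hx).2)]
          exact Finset.sum_nonneg (fun x _ => hg'0 x)
        have h3 : lam * (wb e + t) ≤ t := by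
          rw [hlam]
          rw [div_mul_eq_mul_div, div_le_iff₀ hWt0]
          have := hWe e he
          nlinarith
        nlinarith
    -- τ is at most the mixed cover total
    have hτle : τ ≤ ∑ᶠ x, gmix x := by
      rw [hτdef]
      apply csInf_le
      · refine ⟨0, ?_⟩
        rintro x ⟨g₁, hg₁f, hg₁0, _, rfl⟩
        exact finsum_nonneg hg₁0
      · exact ⟨gmix, hgmixfin, hgmix0, hgmixcov, rfl⟩
    -- final algebra
    have hends : τ ≤ (1 - lam) * (τ + t * t) + lam * (α * d * (ν + t * N + t * Λ) + t) := by
      have hA : (1 - lam) * (∑ᶠ x, m x) ≤ (1 - lam) * (τ + t * t) :=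
        mul_le_mul_of_nonneg_left (le_of_lt htmlt) (by linarith)
      have hB : lam * (∑ᶠ x, g' x) ≤ lam * (α * d * (ν + t * N + t * Λ) + t) := by
        apply mul_le_mul_of_nonneg_left _ (le_of_lt hlam0)
        rw [hg'tot]
        exact le_of_lt htglt
      calc τ ≤ ∑ᶠ x, gmix x := hτle
        _ = (1 - lam) * (∑ᶠ x, m x) + lam * (∑ᶠ x, g' x) := hgmixtot
        _ ≤ _ := by linarith
    have hstep : lam * τ ≤ t * t + lam * (α * d * (ν + t * N + t * Λ) + t) := by
      nlinarith [hends, hlam0.le, hlam1, sq_nonneg t]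
    have hdiv : τ ≤ t * t / lam + (α * d * (ν + t * N + t * Λ) + t) := by
      have h1 : (τ - (α * d * (ν + t * N + t * Λ) + t)) * lam ≤ t * t := by nlinarith [hstep]
      have h2 : τ - (α * d * (ν + t * N + t * Λ) + t) ≤ t * t / lam :=
        (le_div_iff₀ hlam0).mpr h1
      linarith
    have ht0' : t ≠ 0 := ne_of_gt ht
    have hlamval : t * t / lam = t * (W + t) := by
      rw [hlam]
      field_simp
    have hfinal2 : τ ≤ t * (W + t) + (α * d * (ν + t * N + t * Λ) + t) := by
      rw [← hlamval]
      exact hdiv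
    have hexp : α * d * (ν + t * N + t * Λ) = α * d * ν + α * d * N * t + α * d * Λ * t := by
      ring
    have htt : t * t ≤ t := by nlinarith
    have hN0 : (0:ℝ) ≤ N := Nat.cast_nonneg _
    rw [hexp] at hfinal2
    rw [hC]
    nlinarith [hfinal2, htt, ht.le, mul_nonneg (mul_nonneg hα.le hd0.le) hN0,
      mul_nonneg (mul_nonneg hα.le hd0.le) hΛ0]
  -- conclude by letting t → 0
  apply le_of_forall_pos_le_add
  intro η hη
  set t := min 1 (η / C) with htdef
  have ht : 0 < t := lt_min one_pos (div_pos hη hC0)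
  have ht1 : t ≤ 1 := min_le_left _ _
  have hk := key t ht ht1
  have hCt : C * t ≤ η := by
    have h1 : t ≤ η / C := min_le_right _ _
    calc C * t ≤ C * (η / C) := by nlinarith [hC0]
      _ = η := by field_simp
  linarith

/-- If every finite hypergraph `G` of `d`-intervals satisfies
`τ*_ℓ(G) ≤ αd·ν_ℓ(G)` (where `ℓ` is the total-length weight system), then
every finite hypergraph `H` of `d`-intervals with an arbitrary weight system
`w : E(H) → ℕ` satisfies `τ_w(H) ≤ αd²·ν_w(H)`. -/
theorem tauW_le_alpha_d_sq_mul_nuW (d : ℕ) (hd : 1 ≤ d) (α : ℝ) (hα : 0 < α)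
    (hyp : ∀ G : Set (Set ℝ), G.Finite →
      (∀ e ∈ G, IsDInterval d e ∧ e.Nonempty) →
      tauStarWR G totalLength ≤ α * d * nuWR G totalLength)
    (H : Set (Set ℝ)) (hfin : H.Finite)
    (hH : ∀ e ∈ H, IsDInterval d e ∧ e.Nonempty)
    (w : Set ℝ → ℕ) :
    (tauW H w : ℝ) ≤ α * d ^ 2 * (nuW H w : ℝ) := by

  have hd0 : (0:ℝ) < (d:ℝ) := by exact_mod_cast hd
  have hfrac := frac_bound d hd α hα hyp H hfin hH w
  set τ := tauStarWR H (fun e => ((w e : ℕ) : ℝ)) with hτ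
  have hτdef : τ = sInf {t | ∃ g : ℝ → ℝ, (Function.support g).Finite ∧ (∀ x, 0 ≤ g x) ∧
      (∀ e ∈ H, ((w e : ℕ) : ℝ) ≤ ∑ᶠ x ∈ e, g x) ∧ t = ∑ᶠ x, g x} := rfl
  have hdle : ∀ δ : ℝ, 0 < δ → (tauW H w : ℝ) ≤ (d:ℝ) * (τ + δ) := by
    intro δ hδ
    have hCSne := coverset_ne H hfin (fun e he => (hH e he).2) (fun e => ((w e : ℕ) : ℝ))
    obtain ⟨tg, htg, hlt⟩ := exists_lt_of_csInf_lt hCSne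
      (show sInf _ < τ + δ by rw [← hτdef]; linarith)
    obtain ⟨g, hgf, hg0, hgc, rfl⟩ := htg
    have hsw := sweep_round d hd H hH w g hgf hg0 hgc
    calc (tauW H w : ℝ) ≤ (d:ℝ) * ∑ᶠ x, g x := hsw
      _ ≤ (d:ℝ) * (τ + δ) := mul_le_mul_of_nonneg_left hlt.le hd0.le
  have hdle2 : (tauW H w : ℝ) ≤ (d:ℝ) * τ := by
    apply le_of_forall_pos_le_add
    intro η hη
    have h1 := hdle (η / d) (by positivity)
    have h2 : (d:ℝ) * (τ + η / d) = (d:ℝ) * τ + η := by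
      field_simp
    linarith
  calc (tauW H w : ℝ) ≤ (d:ℝ) * τ := hdle2
    _ ≤ (d:ℝ) * (α * d * (nuW H w : ℝ)) := mul_le_mul_of_nonneg_left hfrac hd0.le
    _ = α * d ^ 2 * (nuW H w : ℝ) := by ring
end

section
/- Let d ≥ 1 and let H be a finite hypergraph of d-intervals. Then ν*(H) ≥ τ(H)/d; equivalently, τ(H) ≤ d·ν*(H). -/
open Finset in
theorem myFarkas : ∀ (m : ℕ) {ι : Type} [Fintype ι] (M : ι → Fin m → ℝ) (c : ι → ℝ),
    (¬ ∃ y : Fin m → ℝ, ∀ i, (∑ j, M i j * y j) ≤ c i) →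
    ∃ u : ι → ℝ, (∀ i, 0 ≤ u i) ∧ (∀ k, ∑ i, u i * M i k = 0) ∧ ∑ i, u i * c i < 0 := by
  intro m
  induction m with
  | zero =>
    intro ι _ M c hinf
    classical
    push_neg at hinf
    obtain ⟨i, hi⟩ := hinf (fun _ => 0)
    simp only [Finset.univ_eq_empty, Finset.sum_empty] at hi
    refine ⟨fun i' => if i = i' then 1 else 0, ?_, ?_, ?_⟩
    · intro i'; dsimp only; split <;> norm_num
    · intro k; exact k.elim0
    · calc ∑ i', (if i = i' then (1:ℝ) else 0) * c i'
          = ∑ i', (if i = i' then c i' else 0) := by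
            refine Finset.sum_congr rfl fun i' _ => ?_; split <;> simp
        _ = c i := by rw [Finset.sum_ite_eq]; simp
        _ < 0 := hi
  | succ m IH =>
    intro ι _ M c hinf
    classical
    set α : ι → ℝ := fun i => M i (Fin.last m) with hα
    set M' : ι → Fin m → ℝ := fun i k => M i k.castSucc with hM'
    let P := {i : ι // 0 < α i}
    let Ng := {j : ι // α j < 0}
    let Z := {i : ι // α i = 0}
    let w : (Z ⊕ P × Ng) → ι → ℝ := fun i' i =>
      match i' with
      | Sum.inl i0 => if i0.1 = i then 1 else 0
      | Sum.inr (i0, j0) =>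
          (if i0.1 = i then -α j0.1 else 0) + (if j0.1 = i then α i0.1 else 0)
    have hw_nonneg : ∀ i' i, 0 ≤ w i' i := by
      rintro (i0 | ⟨i0, j0⟩) i
      · dsimp only [w]; split <;> norm_num
      · have h1 : (0:ℝ) ≤ (if i0.1 = i then -α j0.1 else 0) := by
          split
          · linarith [j0.2]
          · exact le_rfl
        have h2 : (0:ℝ) ≤ (if j0.1 = i then α i0.1 else 0) := by
          split
          · linarith [i0.2]
          · exact le_rfl
        exact add_nonneg h1 h2
    have hwfZ : ∀ (i0 : Z) (f : ι → ℝ), ∑ i, w (Sum.inl i0) i * f i = f i0.1 := by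
      intro i0 f
      simp only [w]
      rw [Finset.sum_congr rfl (fun i _ => by rw [ite_mul, one_mul, zero_mul]),
        Finset.sum_ite_eq]
      simp
    have hwfP : ∀ (i0 : P) (j0 : Ng) (f : ι → ℝ),
        ∑ i, w (Sum.inr (i0, j0)) i * f i = (-α j0.1) * f i0.1 + α i0.1 * f j0.1 := by
      intro i0 j0 f
      simp only [w, add_mul]
      rw [Finset.sum_add_distrib]
      congr 1
      · rw [Finset.sum_congr rfl (fun i _ => by rw [ite_mul, zero_mul]),
          Finset.sum_ite_eq]; simp
      · rw [Finset.sum_congr rfl (fun i _ => by rw [ite_mul, zero_mul]),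
          Finset.sum_ite_eq]; simp
    set N : (Z ⊕ P × Ng) → Fin m → ℝ := fun i' k => ∑ i, w i' i * M' i k with hN
    set c' : (Z ⊕ P × Ng) → ℝ := fun i' => ∑ i, w i' i * c i with hc'
    have hinf' : ¬ ∃ y : Fin m → ℝ, ∀ i', (∑ k, N i' k * y k) ≤ c' i' := by
      rintro ⟨y', hy'⟩
      apply hinf
      set S : ι → ℝ := fun i => ∑ k, M' i k * y' k with hS
      have hrow : ∀ i', ∑ k, N i' k * y' k = ∑ i, w i' i * S i := by
        intro i'
        simp only [hN, Finset.sum_mul, hS, Finset.mul_sum]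
        rw [Finset.sum_comm]
        exact Finset.sum_congr rfl fun i _ => Finset.sum_congr rfl fun k _ => by ring
      have hz : ∀ i0 : Z, S i0.1 ≤ c i0.1 := by
        intro i0
        have h := hy' (Sum.inl i0)
        rw [hrow (Sum.inl i0), hwfZ i0 S] at h
        calc S i0.1 ≤ c' (Sum.inl i0) := h
          _ = c i0.1 := hwfZ i0 c
      have hpn : ∀ (i0 : P) (j0 : Ng),
          (-α j0.1) * S i0.1 + α i0.1 * S j0.1 ≤ (-α j0.1) * c i0.1 + α i0.1 * c j0.1 := by
        intro i0 j0
        have h := hy' (Sum.inr (i0, j0))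
        rw [hrow (Sum.inr (i0, j0)), hwfP i0 j0 S] at h
        calc (-α j0.1) * S i0.1 + α i0.1 * S j0.1 ≤ c' (Sum.inr (i0, j0)) := h
          _ = (-α j0.1) * c i0.1 + α i0.1 * c j0.1 := hwfP i0 j0 c
      set U : P → ℝ := fun i0 => (c i0.1 - S i0.1) / α i0.1 with hU
      set L : Ng → ℝ := fun j0 => (c j0.1 - S j0.1) / α j0.1 with hL
      have hLU : ∀ (i0 : P) (j0 : Ng), L j0 ≤ U i0 := by
        intro i0 j0
        have hc0 := hpn i0 j0
        have hip : 0 < α i0.1 := i0.2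
        have hjn : α j0.1 < 0 := j0.2
        rw [hL, hU, le_div_iff₀ hip, div_mul_eq_mul_div, div_le_iff_of_neg hjn]
        nlinarith [hc0]
      have ht : ∃ t : ℝ, (∀ i0 : P, t ≤ U i0) ∧ (∀ j0 : Ng, L j0 ≤ t) := by
        by_cases hP : Nonempty P
        · refine ⟨Finset.univ.inf' Finset.univ_nonempty U, fun i0 => ?_, fun j0 => ?_⟩
          · exact Finset.inf'_le U (Finset.mem_univ i0)
          · exact Finset.le_inf' _ _ fun i0 _ => hLU i0 j0
        · by_cases hNg : Nonempty Ng
          · refine ⟨Finset.univ.sup' Finset.univ_nonempty L, fun i0 => (hP ⟨i0⟩).elim,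
              fun j0 => Finset.le_sup' L (Finset.mem_univ j0)⟩
          · exact ⟨0, fun i0 => (hP ⟨i0⟩).elim, fun j0 => (hNg ⟨j0⟩).elim⟩
      obtain ⟨t, htU, htL⟩ := ht
      refine ⟨Fin.snoc y' t, fun i => ?_⟩
      have hsum : ∑ j : Fin (m+1), M i j * (Fin.snoc y' t : Fin (m+1) → ℝ) j
          = S i + α i * t := by
        rw [Fin.sum_univ_castSucc]
        simp [hS, hα, hM']
      rw [hsum]
      rcases lt_trichotomy (α i) 0 with hneg | hzero | hpos
      · have h1 := htL ⟨i, hneg⟩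
        have h2 := mul_le_mul_of_nonpos_left h1 (le_of_lt hneg)
        rw [hL, mul_div_cancel₀ _ (ne_of_lt hneg)] at h2
        dsimp only at h2
        linarith
      · have := hz ⟨i, hzero⟩
        rw [hzero]
        dsimp only at this
        linarith
      · have h1 := htU ⟨i, hpos⟩
        have h2 := mul_le_mul_of_nonneg_left h1 (le_of_lt hpos)
        rw [hU, mul_div_cancel₀ _ (ne_of_gt hpos)] at h2
        dsimp only at h2
        linarith
    obtain ⟨v, hv0, hvM, hvc⟩ := IH N c' hinf'
    set u : ι → ℝ := fun i => ∑ i', v i' * w i' i with hu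
    have key : ∀ f : ι → ℝ, ∑ i, u i * f i = ∑ i', v i' * (∑ i, w i' i * f i) := by
      intro f
      simp only [hu, Finset.sum_mul]
      rw [Finset.sum_comm]
      exact Finset.sum_congr rfl fun i' _ => by
        rw [Finset.mul_sum]
        exact Finset.sum_congr rfl fun i _ => by ring
    refine ⟨u, ?_, ?_, ?_⟩
    · intro i
      exact Finset.sum_nonneg fun i' _ => mul_nonneg (hv0 i') (hw_nonneg i' i)
    · intro k
      induction k using Fin.lastCases with
      | last =>
        rw [key (fun i => M i (Fin.last m))]
        apply Finset.sum_eq_zero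
        rintro (i0 | ⟨i0, j0⟩) _
        · rw [hwfZ i0 (fun i => M i (Fin.last m))]
          have h0 : M i0.1 (Fin.last m) = 0 := i0.2
          rw [h0, mul_zero]
        · rw [hwfP i0 j0 (fun i => M i (Fin.last m))]
          have h0 : (-α j0.1) * (fun i => M i (Fin.last m)) i0.1
              + α i0.1 * (fun i => M i (Fin.last m)) j0.1 = 0 := by
            show (-α j0.1) * α i0.1 + α i0.1 * α j0.1 = 0
            ring
          rw [h0, mul_zero]
      | cast k =>
        rw [key (fun i => M i k.castSucc)]
        calc ∑ i', v i' * (∑ i, w i' i * M i k.castSucc)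
            = ∑ i', v i' * N i' k := Finset.sum_congr rfl fun i' _ => by congr 1
          _ = 0 := hvM k
    · calc ∑ i, u i * c i = ∑ i', v i' * (∑ i, w i' i * c i) := key c
        _ < 0 := hvc

open Finset in
theorem myRounding : ∀ (n : ℕ) (S : Finset (ℝ × ℝ)), S.card ≤ n →
    ∀ (P : Finset ℝ) (w : ℝ → ℝ), (∀ p, 0 ≤ w p) →
    (∀ q ∈ S, 1 ≤ ∑ p ∈ P.filter (fun p => q.1 ≤ p ∧ p ≤ q.2), w p) →
    ∃ C : Finset ℝ, (∀ q ∈ S, ∃ x ∈ C, q.1 ≤ x ∧ x ≤ q.2) ∧ (C.card : ℝ) ≤ ∑ p ∈ P, w p := by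
  intro n
  induction n with
  | zero =>
    intro S hS P w hw _
    rw [Nat.le_zero, Finset.card_eq_zero] at hS
    subst hS
    exact ⟨∅, by simp, by simpa using Finset.sum_nonneg fun p _ => hw p⟩
  | succ n IH =>
    intro S hS P w hw hcov
    classical
    rcases S.eq_empty_or_nonempty with rfl | hne
    · exact ⟨∅, by simp, by simpa using Finset.sum_nonneg fun p _ => hw p⟩
    obtain ⟨q₀, hq₀S, hmin⟩ := S.exists_min_image (fun q => q.2) hne
    set b₀ := q₀.2 with hb₀
    -- the minimal interval is nonempty (it carries weight ≥ 1)
    have hq₀ne : q₀.1 ≤ b₀ := by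
      have h1 := hcov q₀ hq₀S
      have h2 : (P.filter (fun p => q₀.1 ≤ p ∧ p ≤ q₀.2)).Nonempty := by
        by_contra hemp
        rw [Finset.not_nonempty_iff_eq_empty] at hemp
        rw [hemp] at h1
        simp only [Finset.sum_empty] at h1
        linarith
      obtain ⟨p, hp⟩ := h2
      rw [Finset.mem_filter] at hp
      exact le_trans hp.2.1 hp.2.2
    set S' := S.filter (fun q => b₀ < q.1) with hS'
    set P' := P.filter (fun p => b₀ < p) with hP'
    have hScard : S'.card ≤ n := by
      have hlt : S'.card < S.card := Finset.card_lt_card ⟨Finset.filter_subset _ _, by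
        intro hsub
        have := hsub hq₀S
        rw [hS', Finset.mem_filter] at this
        exact absurd this.2 (not_lt.mpr hq₀ne)⟩
      omega
    have hcov' : ∀ q ∈ S', 1 ≤ ∑ p ∈ P'.filter (fun p => q.1 ≤ p ∧ p ≤ q.2), w p := by
      intro q hq
      rw [hS', Finset.mem_filter] at hq
      have heq : P'.filter (fun p => q.1 ≤ p ∧ p ≤ q.2)
          = P.filter (fun p => q.1 ≤ p ∧ p ≤ q.2) := by
        rw [hP', Finset.filter_filter]
        apply Finset.filter_congr
        intro p _
        constructor
        · rintro ⟨_, h⟩; exact h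
        · intro h; exact ⟨lt_of_lt_of_le hq.2 h.1, h⟩
      rw [heq]
      exact hcov q hq.1
    obtain ⟨C', hC'cov, hC'card⟩ := IH S' hScard P' w hw hcov'
    refine ⟨insert b₀ C', ?_, ?_⟩
    · intro q hq
      by_cases hb : b₀ < q.1
      · obtain ⟨x, hx, hxq⟩ := hC'cov q (by rw [hS', Finset.mem_filter]; exact ⟨hq, hb⟩)
        exact ⟨x, Finset.mem_insert_of_mem hx, hxq⟩
      · exact ⟨b₀, Finset.mem_insert_self _ _, not_lt.mp hb, hmin q hq⟩
    · have h1 : ((insert b₀ C').card : ℝ) ≤ C'.card + 1 := by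
        have := Finset.card_insert_le b₀ C'
        exact_mod_cast this
      have hsplit : ∑ p ∈ P, w p
          = ∑ p ∈ P.filter (fun p => b₀ < p), w p
            + ∑ p ∈ P.filter (fun p => ¬ b₀ < p), w p :=
        (Finset.sum_filter_add_sum_filter_not P _ w).symm
      have hheavy : 1 ≤ ∑ p ∈ P.filter (fun p => ¬ b₀ < p), w p := by
        refine le_trans (hcov q₀ hq₀S) (Finset.sum_le_sum_of_subset_of_nonneg ?_
          fun p _ _ => hw p)
        intro p hp
        rw [Finset.mem_filter] at hp ⊢
        exact ⟨hp.1, not_lt.mpr hp.2.2⟩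
      rw [hsplit]
      rw [hP'] at hC'card
      linarith

/-- The covering (transversal) number: the minimum size of a finite set of
points meeting every edge. -/
noncomputable def tau {α : Type*} (H : Set (Set α)) : ℕ :=
  sInf {n | ∃ C : Finset α, (∀ e ∈ H, ∃ x ∈ C, x ∈ e) ∧ C.card = n}

/-- The fractional matching number: the supremum of `∑ₑ g e` over nonnegative
functions `g` supported on the edges of `H` with `∑_{e ∋ x} g e ≤ 1` for every
point `x`. -/
noncomputable def nuStar {α : Type*} (H : Set (Set α)) : ℝ :=
  sSup {t | ∃ g : Set α → ℝ, (∀ e, 0 ≤ g e) ∧ (∀ e, g e ≠ 0 → e ∈ H) ∧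
    (∀ x : α, ∑ᶠ e ∈ {e : Set α | x ∈ e}, g e ≤ 1) ∧ t = ∑ᶠ e, g e}

/-- For a finite hypergraph of `d`-intervals, `ν*(H) ≥ τ(H)/d`, i.e.
`τ(H) ≤ d·ν*(H)`. -/
theorem tau_le_d_mul_nuStar (d : ℕ) (hd : 1 ≤ d)
    (H : Set (Set ℝ)) (hfin : H.Finite)
    (hH : ∀ e ∈ H, IsDInterval d e ∧ e.Nonempty) :
    (tau H : ℝ) ≤ d * nuStar H := by
  classical
  set E := hfin.toFinset with hEdef
  have hmemE : ∀ e, e ∈ E ↔ e ∈ H := fun e => hfin.mem_toFinset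
  set Tset : Set ℝ := {t | ∃ g : Set ℝ → ℝ, (∀ e, 0 ≤ g e) ∧ (∀ e, g e ≠ 0 → e ∈ H) ∧
    (∀ x : ℝ, ∑ᶠ e ∈ {e : Set ℝ | x ∈ e}, g e ≤ 1) ∧ t = ∑ᶠ e, g e} with hTset
  have hnu : nuStar H = sSup Tset := rfl
  -- rewriting the local (finsum) constraints as finite sums
  have hfinsum_mem : ∀ (g : Set ℝ → ℝ), (∀ e, g e ≠ 0 → e ∈ H) → ∀ x : ℝ,
      ∑ᶠ e ∈ {e : Set ℝ | x ∈ e}, g e = ∑ e ∈ E.filter (fun e => x ∈ e), g e := by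
    intro g hgsupp x
    refine finsum_mem_eq_sum_of_inter_support_eq g ?_
    ext e'
    simp only [Set.mem_inter_iff, Set.mem_setOf_eq, Finset.coe_filter,
      Function.mem_support]
    constructor
    · rintro ⟨h1, h2⟩; exact ⟨⟨(hmemE e').2 (hgsupp e' h2), h1⟩, h2⟩
    · rintro ⟨⟨_, h1⟩, h2⟩; exact ⟨h1, h2⟩
  -- boundedness of the feasible values
  have hbdd : BddAbove Tset := by
    refine ⟨(E.card : ℝ), ?_⟩
    rintro t ⟨g, hg0, hgsupp, hgx, rfl⟩
    have hsupp : Function.support g ⊆ ↑E := fun e he => (hmemE e).2 (hgsupp e he)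
    rw [finsum_eq_sum_of_support_subset g hsupp]
    have hg1 : ∀ e ∈ E, g e ≤ 1 := by
      intro e he
      rcases eq_or_ne (g e) 0 with h | h
      · rw [h]; norm_num
      obtain ⟨x, hx⟩ := (hH e ((hmemE e).1 he)).2
      have hcon := hgx x
      rw [hfinsum_mem g hgsupp x] at hcon
      refine le_trans ?_ hcon
      refine Finset.single_le_sum (fun e' _ => hg0 e') ?_
      rw [Finset.mem_filter]; exact ⟨he, hx⟩
    calc ∑ e ∈ E, g e ≤ ∑ _e ∈ E, (1:ℝ) := Finset.sum_le_sum hg1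
      _ = E.card := by simp
  -- decompositions into at most d closed intervals
  have hdec : ∀ e : Set ℝ, ∃ (n : ℕ) (a b : Fin n → ℝ), e ∈ H →
      (n ≤ d ∧ (∀ i, a i ≤ b i) ∧
        (Set.univ : Set (Fin n)).PairwiseDisjoint (fun i => Set.Icc (a i) (b i)) ∧
        e = ⋃ i, Set.Icc (a i) (b i)) := by
    intro e
    by_cases he : e ∈ H
    · obtain ⟨n, a, b, h⟩ := (hH e he).1
      exact ⟨n, a, b, fun _ => h⟩
    · exact ⟨0, Fin.elim0, Fin.elim0, fun h => absurd h he⟩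
  choose nE aE bE hdecE using hdec
  set P : Finset ℝ := E.biUnion (fun e => Finset.univ.image (aE e)) with hPdef
  have haP : ∀ e ∈ E, ∀ i, aE e i ∈ P := by
    intro e he i
    exact Finset.mem_biUnion.2 ⟨e, he, Finset.mem_image.2 ⟨i, Finset.mem_univ i, rfl⟩⟩
  have hcomp : ∀ e, e ∈ H → ∀ x : ℝ, x ∈ e → ∃ i, aE e i ≤ x ∧ x ≤ bE e i := by
    intro e he x hx
    obtain ⟨_, _, _, hrep⟩ := hdecE e he
    rw [hrep] at hx
    obtain ⟨i, hi⟩ := Set.mem_iUnion.1 hx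
    exact ⟨i, hi.1, hi.2⟩
  have hIcc_sub : ∀ e, e ∈ H → ∀ i, Set.Icc (aE e i) (bE e i) ⊆ e := by
    intro e he i z hz
    rw [(hdecE e he).2.2.2]
    exact Set.mem_iUnion.2 ⟨i, hz⟩
  have hPdom : ∀ x : ℝ, ∀ e₀, e₀ ∈ H → x ∈ e₀ →
      ∃ p ∈ P, p ≤ x ∧ ∀ e, e ∈ H → x ∈ e → p ∈ e := by
    intro x e₀ he₀ hx
    set Q : Finset ℝ := E.biUnion (fun e =>
      (Finset.univ.filter (fun i => aE e i ≤ x ∧ x ≤ bE e i)).image (aE e)) with hQdef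
    have hQprop : ∀ p ∈ Q, p ∈ P ∧ p ≤ x := by
      intro p hp
      obtain ⟨e, he, hp2⟩ := Finset.mem_biUnion.1 hp
      obtain ⟨i, hi, rfl⟩ := Finset.mem_image.1 hp2
      rw [Finset.mem_filter] at hi
      exact ⟨haP e he i, hi.2.1⟩
    have hQne : Q.Nonempty := by
      obtain ⟨i, hi1, hi2⟩ := hcomp e₀ he₀ x hx
      exact ⟨aE e₀ i, Finset.mem_biUnion.2 ⟨e₀, (hmemE e₀).2 he₀, Finset.mem_image.2
        ⟨i, Finset.mem_filter.2 ⟨Finset.mem_univ i, hi1, hi2⟩, rfl⟩⟩⟩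
    set p := Q.max' hQne with hpdef
    have hpQ : p ∈ Q := Q.max'_mem hQne
    obtain ⟨hpP, hple⟩ := hQprop p hpQ
    refine ⟨p, hpP, hple, ?_⟩
    intro e he hxe
    obtain ⟨i, hi1, hi2⟩ := hcomp e he x hxe
    have hiQ : aE e i ∈ Q := Finset.mem_biUnion.2 ⟨e, (hmemE e).2 he, Finset.mem_image.2
      ⟨i, Finset.mem_filter.2 ⟨Finset.mem_univ i, hi1, hi2⟩, rfl⟩⟩
    exact hIcc_sub e he i ⟨Q.le_max' _ hiQ, le_trans hple hi2⟩
  have hPe : ∀ e, e ∈ H → ∃ p ∈ P, p ∈ e := by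
    intro e he
    obtain ⟨x, hx⟩ := (hH e he).2
    obtain ⟨p, hpP, _, hpdom⟩ := hPdom x e he hx
    exact ⟨p, hpP, hpdom e he hx⟩
  have hd0 : (0:ℝ) < d := by
    have h1 : (1:ℝ) ≤ d := by exact_mod_cast hd
    linarith
  -- the LP
  set m := Fintype.card {p : ℝ // p ∈ P} with hmdef
  set φe : Fin m ≃ {p : ℝ // p ∈ P} := (Fintype.equivFin {p : ℝ // p ∈ P}).symm with hφdef
  set M : (({e : Set ℝ // e ∈ E} ⊕ {p : ℝ // p ∈ P}) ⊕ Unit) → Fin m → ℝ :=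
    Sum.elim (Sum.elim
      (fun (e : {e : Set ℝ // e ∈ E}) (k : Fin m) => if (φe k).1 ∈ e.1 then (-1:ℝ) else 0)
      (fun (p : {p : ℝ // p ∈ P}) (k : Fin m) => if φe k = p then (-1:ℝ) else 0))
      (fun (_ : Unit) (_ : Fin m) => (1:ℝ)) with hMdef
  set cvec : (({e : Set ℝ // e ∈ E} ⊕ {p : ℝ // p ∈ P}) ⊕ Unit) → ℝ :=
    Sum.elim (Sum.elim (fun _ => (-1:ℝ)) (fun _ => (0:ℝ))) (fun _ => nuStar H) with hcvecdef
  by_cases hfeas : ∃ y : Fin m → ℝ, ∀ i, (∑ j, M i j * y j) ≤ cvec i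
  · -- a dual solution exists: round it to an integral cover
    obtain ⟨y, hy⟩ := hfeas
    have hy0 : ∀ k, 0 ≤ y k := by
      intro k
      have h : ∑ j, (if φe j = φe k then (-1:ℝ) else 0) * y j ≤ 0 :=
        hy (Sum.inl (Sum.inr (φe k)))
      have heq : ∑ j, (if φe j = φe k then (-1:ℝ) else 0) * y j = - y k := by
        calc ∑ j, (if φe j = φe k then (-1:ℝ) else 0) * y j
            = ∑ j, (if j = k then -y j else 0) := by
              refine Finset.sum_congr rfl fun j _ => ?_
              by_cases hjk : j = k
              · subst hjk; simp
              · have hne : φe j ≠ φe k := fun hc => hjk (φe.injective hc)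
                simp [hjk, hne]
          _ = - y k := by rw [Finset.sum_ite_eq' Finset.univ k (fun j => -y j)]; simp
      rw [heq] at h
      linarith
    have hyE : ∀ e : {e : Set ℝ // e ∈ E},
        1 ≤ ∑ j, (if (φe j).1 ∈ e.1 then (1:ℝ) else 0) * y j := by
      intro e
      have h : ∑ j, (if (φe j).1 ∈ e.1 then (-1:ℝ) else 0) * y j ≤ -1 :=
        hy (Sum.inl (Sum.inl e))
      have hzero : ∑ j, ((if (φe j).1 ∈ e.1 then (-1:ℝ) else 0) * y j
          + (if (φe j).1 ∈ e.1 then (1:ℝ) else 0) * y j) = 0 := by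
        refine Finset.sum_eq_zero fun j _ => ?_
        split <;> ring
      rw [Finset.sum_add_distrib] at hzero
      linarith
    have hysum : ∑ j, (1:ℝ) * y j ≤ nuStar H := hy (Sum.inr ())
    set wP : ℝ → ℝ := fun p => if hp : p ∈ P then y (φe.symm ⟨p, hp⟩) else 0 with hwPdef
    have hwP0 : ∀ p, 0 ≤ wP p := by
      intro p
      rw [hwPdef]
      dsimp only
      split
      · exact hy0 _
      · exact le_rfl
    have hwPsub : ∀ q : {p : ℝ // p ∈ P}, wP q.1 = y (φe.symm q) := fun q => dif_pos q.2
    have hsum_wP : ∑ p ∈ P, wP p = ∑ k, y k := by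
      rw [← Finset.sum_coe_sort P wP]
      calc ∑ q : {p : ℝ // p ∈ P}, wP q.1
          = ∑ q : {p : ℝ // p ∈ P}, y (φe.symm q) :=
            Finset.sum_congr rfl fun q _ => hwPsub q
        _ = ∑ k, y k := Equiv.sum_comp φe.symm y
    have hePw : ∀ e, e ∈ H → 1 ≤ ∑ p ∈ P.filter (fun p => p ∈ e), wP p := by
      intro e he
      have h1 := hyE ⟨e, (hmemE e).2 he⟩
      set F : {p : ℝ // p ∈ P} → ℝ :=
        fun q => (if q.1 ∈ e then (1:ℝ) else 0) * y (φe.symm q) with hFdef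
      have h2 : ∑ j, (if (φe j).1 ∈ e then (1:ℝ) else 0) * y j = ∑ q, F q := by
        rw [← Equiv.sum_comp φe F]
        refine Finset.sum_congr rfl fun j _ => ?_
        rw [hFdef]
        simp
      have h3 : ∑ q, F q = ∑ p ∈ P.filter (fun p => p ∈ e), wP p := by
        rw [Finset.sum_filter, ← Finset.sum_coe_sort P (fun p => if p ∈ e then wP p else 0)]
        refine Finset.sum_congr rfl fun q _ => ?_
        rw [hFdef, hwPsub q]
        dsimp only
        split <;> ring
      rw [h2, h3] at h1
      exact h1
    -- heavy components
    have hheavy : ∀ e : Set ℝ, ∃ q : ℝ × ℝ, e ∈ H →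
        (Set.Icc q.1 q.2 ⊆ e ∧
          1 ≤ ∑ p ∈ P.filter (fun p => q.1 ≤ p ∧ p ≤ q.2), (d:ℝ) * wP p) := by
      intro e
      by_cases he : e ∈ H
      swap
      · exact ⟨(0,0), fun h => absurd h he⟩
      obtain ⟨hn, hab, hdisj, hrep⟩ := hdecE e he
      have hpart : P.filter (fun p => p ∈ e)
          = Finset.univ.biUnion (fun i : Fin (nE e) =>
              P.filter (fun p => aE e i ≤ p ∧ p ≤ bE e i)) := by
        ext p
        simp only [Finset.mem_filter, Finset.mem_biUnion, Finset.mem_univ, true_and]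
        constructor
        · rintro ⟨hp, hpe⟩
          obtain ⟨i, hi⟩ := hcomp e he p hpe
          exact ⟨i, hp, hi⟩
        · rintro ⟨i, hp, hi1, hi2⟩
          exact ⟨hp, hIcc_sub e he i ⟨hi1, hi2⟩⟩
      have hdisjF : ∀ i ∈ (Finset.univ : Finset (Fin (nE e))), ∀ j ∈ Finset.univ, i ≠ j →
          Disjoint (P.filter (fun p => aE e i ≤ p ∧ p ≤ bE e i))
            (P.filter (fun p => aE e j ≤ p ∧ p ≤ bE e j)) := by
        intro i _ j _ hij
        rw [Finset.disjoint_left]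
        intro p hpi hpj
        rw [Finset.mem_filter] at hpi hpj
        have hd2 := hdisj (Set.mem_univ i) (Set.mem_univ j) hij
        exact Set.disjoint_left.1 hd2 (Set.mem_Icc.2 hpi.2) (Set.mem_Icc.2 hpj.2)
      have hsum := hePw e he
      rw [hpart, Finset.sum_biUnion hdisjF] at hsum
      have hex : ∃ i : Fin (nE e),
          1/(d:ℝ) ≤ ∑ p ∈ P.filter (fun p => aE e i ≤ p ∧ p ≤ bE e i), wP p := by
        by_contra hcon
        push_neg at hcon
        rcases Nat.eq_zero_or_pos (nE e) with h0 | hpos'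
        · have hemp : IsEmpty (Fin (nE e)) := by rw [h0]; infer_instance
          rw [Finset.univ_eq_empty, Finset.sum_empty] at hsum
          linarith
        · have hne : (Finset.univ : Finset (Fin (nE e))).Nonempty :=
            ⟨⟨0, hpos'⟩, Finset.mem_univ _⟩
          have hlt := Finset.sum_lt_sum_of_nonempty hne (fun i _ => hcon i)
          have hcard : ∑ _i : Fin (nE e), (1/(d:ℝ)) = (nE e : ℝ) * (1/d) := by
            rw [Finset.sum_const, Finset.card_univ, Fintype.card_fin, nsmul_eq_mul]
          have hd1 : (nE e : ℝ) * (1/d) ≤ 1 := by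
            rw [mul_one_div, div_le_one hd0]
            exact_mod_cast hn
          rw [hcard] at hlt
          linarith
      obtain ⟨i, hi⟩ := hex
      refine ⟨(aE e i, bE e i), fun _ => ⟨hIcc_sub e he i, ?_⟩⟩
      have heq : ∑ p ∈ P.filter (fun p => aE e i ≤ p ∧ p ≤ bE e i), (d:ℝ) * wP p
          = (d:ℝ) * ∑ p ∈ P.filter (fun p => aE e i ≤ p ∧ p ≤ bE e i), wP p :=
        (Finset.mul_sum _ _ _).symm
      rw [heq]
      calc (1:ℝ) = d * (1/d) := by field_simp
        _ ≤ d * ∑ p ∈ P.filter (fun p => aE e i ≤ p ∧ p ≤ bE e i), wP p :=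
            mul_le_mul_of_nonneg_left hi (le_of_lt hd0)
    choose qE hqE using hheavy
    set S := E.image qE with hSdef
    obtain ⟨C, hCcov, hCcard⟩ := myRounding S.card S le_rfl P (fun p => (d:ℝ) * wP p)
      (fun p => mul_nonneg (le_of_lt hd0) (hwP0 p))
      (by
        intro q hq
        obtain ⟨e, he, rfl⟩ := Finset.mem_image.1 hq
        exact (hqE e ((hmemE e).1 he)).2)
    have hcover : ∀ e ∈ H, ∃ x ∈ C, x ∈ e := by
      intro e he
      have hqS : qE e ∈ S := Finset.mem_image_of_mem qE ((hmemE e).2 he)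
      obtain ⟨x, hxC, hx1, hx2⟩ := hCcov (qE e) hqS
      exact ⟨x, hxC, (hqE e he).1 ⟨hx1, hx2⟩⟩
    have htau : tau H ≤ C.card := Nat.sInf_le ⟨C, hcover, rfl⟩
    calc (tau H : ℝ) ≤ (C.card : ℝ) := by exact_mod_cast htau
      _ ≤ ∑ p ∈ P, (d:ℝ) * wP p := hCcard
      _ = (d:ℝ) * ∑ p ∈ P, wP p := (Finset.mul_sum _ _ _).symm
      _ = (d:ℝ) * ∑ k, y k := by rw [hsum_wP]
      _ ≤ (d:ℝ) * nuStar H := by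
          refine mul_le_mul_of_nonneg_left ?_ (le_of_lt hd0)
          calc ∑ k, y k = ∑ k, 1 * y k := by simp
            _ ≤ nuStar H := hysum
  · -- no dual solution: Farkas yields a contradiction with the definition of ν*
    exfalso
    obtain ⟨u, hu0, hcol, hcost⟩ := myFarkas m M cvec hfeas
    set gE : {e : Set ℝ // e ∈ E} → ℝ := fun e => u (Sum.inl (Sum.inl e)) with hgEdef
    set sP : {p : ℝ // p ∈ P} → ℝ := fun p => u (Sum.inl (Sum.inr p)) with hsPdef
    set lam : ℝ := u (Sum.inr ()) with hlamdef
    have hcost' : lam * nuStar H < ∑ e : {e : Set ℝ // e ∈ E}, gE e := by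
      have h : (∑ e : {e : Set ℝ // e ∈ E}, gE e * (-1)
          + ∑ p : {p : ℝ // p ∈ P}, sP p * 0)
          + ∑ x : Unit, u (Sum.inr x) * nuStar H < 0 := by
        have h0 := hcost
        rw [Fintype.sum_sum_type, Fintype.sum_sum_type] at h0
        exact h0
      rw [Fintype.sum_unique (fun x : Unit => u (Sum.inr x) * nuStar H)] at h
      have h1 : ∑ e : {e : Set ℝ // e ∈ E}, gE e * (-1)
          = - ∑ e : {e : Set ℝ // e ∈ E}, gE e := by
        rw [← Finset.sum_neg_distrib]
        exact Finset.sum_congr rfl fun e _ => by ring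
      rw [h1] at h
      simp only [mul_zero, Finset.sum_const_zero] at h
      have : u (Sum.inr ()) = lam := rfl
      linarith
    have hcolk : ∀ k, ∑ e : {e : Set ℝ // e ∈ E},
        (if (φe k).1 ∈ e.1 then gE e else 0) ≤ lam := by
      intro k
      have h : (∑ e : {e : Set ℝ // e ∈ E}, gE e * (if (φe k).1 ∈ e.1 then (-1:ℝ) else 0)
          + ∑ p : {p : ℝ // p ∈ P}, sP p * (if φe k = p then (-1:ℝ) else 0))
          + ∑ x : Unit, u (Sum.inr x) * 1 = 0 := by
        have h0 := hcol k
        rw [Fintype.sum_sum_type, Fintype.sum_sum_type] at h0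
        exact h0
      have h1 : ∑ e : {e : Set ℝ // e ∈ E}, gE e * (if (φe k).1 ∈ e.1 then (-1:ℝ) else 0)
          = - ∑ e : {e : Set ℝ // e ∈ E}, (if (φe k).1 ∈ e.1 then gE e else 0) := by
        rw [← Finset.sum_neg_distrib]
        refine Finset.sum_congr rfl fun e _ => ?_
        split <;> ring
      have h2 : ∑ p : {p : ℝ // p ∈ P}, sP p * (if φe k = p then (-1:ℝ) else 0)
          = - sP (φe k) := by
        calc ∑ p : {p : ℝ // p ∈ P}, sP p * (if φe k = p then (-1:ℝ) else 0)
            = ∑ p : {p : ℝ // p ∈ P}, (if φe k = p then -sP p else 0) := by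
              refine Finset.sum_congr rfl fun p _ => ?_
              split <;> ring
          _ = - sP (φe k) := by
              rw [Finset.sum_ite_eq Finset.univ (φe k) (fun p => -sP p)]
              simp
      rw [Fintype.sum_unique (fun x : Unit => u (Sum.inr x) * 1), h1, h2] at h
      have h3 : 0 ≤ sP (φe k) := hu0 (Sum.inl (Sum.inr (φe k)))
      have h4 : u (Sum.inr ()) = lam := rfl
      rw [mul_one] at h
      linarith
    rcases eq_or_lt_of_le (hu0 (Sum.inr ())) with hlam0 | hlam
    · -- lam = 0
      have hpos : 0 < ∑ e : {e : Set ℝ // e ∈ E}, gE e := by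
        have : lam = 0 := hlam0.symm
        rw [this] at hcost'
        linarith
      have hex : ∃ e : {e : Set ℝ // e ∈ E}, 0 < gE e := by
        by_contra hno
        push_neg at hno
        have := Finset.sum_nonpos (fun e (_ : e ∈ Finset.univ) => hno e)
        linarith
      obtain ⟨e₀, he₀⟩ := hex
      obtain ⟨p, hpP, hpe⟩ := hPe e₀.1 ((hmemE e₀.1).1 e₀.2)
      have hk := hcolk (φe.symm ⟨p, hpP⟩)
      simp only [Equiv.apply_symm_apply] at hk
      have hsingle : gE e₀ ≤ ∑ e : {e : Set ℝ // e ∈ E}, (if p ∈ e.1 then gE e else 0) := by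
        have hfnn : ∀ e : {e : Set ℝ // e ∈ E}, e ∈ Finset.univ →
            0 ≤ (if p ∈ e.1 then gE e else 0) := by
          intro e _
          split
          · exact hu0 _
          · exact le_rfl
        have h5 := Finset.single_le_sum
          (f := fun e : {e : Set ℝ // e ∈ E} => if p ∈ e.1 then gE e else 0)
          hfnn (Finset.mem_univ e₀)
        simp only [hpe, if_true] at h5
        exact h5
      have hlamz : lam = 0 := hlam0.symm
      rw [hlamz] at hk
      linarith
    · -- lam > 0 : build a fractional matching of value > ν*
      set g : Set ℝ → ℝ := fun s => if hs : s ∈ E then gE ⟨s, hs⟩ / lam else 0 with hgdef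
      have hg0 : ∀ s, 0 ≤ g s := by
        intro s
        rw [hgdef]
        dsimp only
        split
        · exact div_nonneg (hu0 _) (le_of_lt hlam)
        · exact le_rfl
      have hgsupp : ∀ s, g s ≠ 0 → s ∈ H := by
        intro s hgs
        by_cases hs : s ∈ E
        · exact (hmemE s).1 hs
        · exact absurd (dif_neg hs) hgs
      have hsupport : Function.support g ⊆ ↑E := by
        intro s hs
        exact (hmemE s).2 (hgsupp s hs)
      have hgsum : ∑ᶠ s, g s = (∑ e : {e : Set ℝ // e ∈ E}, gE e) / lam := by
        rw [finsum_eq_sum_of_support_subset g hsupport, ← Finset.sum_coe_sort E g,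
          Finset.sum_div]
        refine Finset.sum_congr rfl fun e _ => ?_
        exact dif_pos e.2
      have hgx : ∀ x : ℝ, ∑ᶠ e ∈ {e : Set ℝ | x ∈ e}, g e ≤ 1 := by
        intro x
        rw [hfinsum_mem g hgsupp x]
        by_cases hex : ∃ e₀, e₀ ∈ H ∧ x ∈ e₀
        · obtain ⟨e₀, he₀, hxe₀⟩ := hex
          obtain ⟨p, hpP, _, hpdom⟩ := hPdom x e₀ he₀ hxe₀
          have hsub : E.filter (fun e => x ∈ e) ⊆ E.filter (fun e => p ∈ e) := by
            intro e he
            rw [Finset.mem_filter] at he ⊢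
            exact ⟨he.1, hpdom e ((hmemE e).1 he.1) he.2⟩
          have hmono : ∑ e ∈ E.filter (fun e => x ∈ e), g e
              ≤ ∑ e ∈ E.filter (fun e => p ∈ e), g e :=
            Finset.sum_le_sum_of_subset_of_nonneg hsub (fun e _ _ => hg0 e)
          have heq2 : ∑ e ∈ E.filter (fun e => p ∈ e), g e
              = (∑ e : {e : Set ℝ // e ∈ E}, if p ∈ e.1 then gE e else 0) / lam := by
            rw [Finset.sum_filter,
              ← Finset.sum_coe_sort E (fun e => if p ∈ e then g e else 0),
              Finset.sum_div]
            refine Finset.sum_congr rfl fun e _ => ?_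
            by_cases hc : p ∈ e.1
            · rw [if_pos hc, if_pos hc]
              exact dif_pos e.2
            · rw [if_neg hc, if_neg hc, zero_div]
          have hk := hcolk (φe.symm ⟨p, hpP⟩)
          simp only [Equiv.apply_symm_apply] at hk
          calc ∑ e ∈ E.filter (fun e => x ∈ e), g e
              ≤ ∑ e ∈ E.filter (fun e => p ∈ e), g e := hmono
            _ = (∑ e : {e : Set ℝ // e ∈ E}, if p ∈ e.1 then gE e else 0) / lam := heq2
            _ ≤ 1 := by
                rw [div_le_one hlam]
                exact hk
        · push_neg at hex
          have hemp : E.filter (fun e => x ∈ e) = ∅ := by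
            rw [Finset.filter_eq_empty_iff]
            intro e he hxe
            exact hex e ((hmemE e).1 he) hxe
          rw [hemp, Finset.sum_empty]
          norm_num
      have hmem : (∑ᶠ s, g s) ∈ Tset := ⟨g, hg0, hgsupp, hgx, rfl⟩
      have hle := le_csSup hbdd hmem
      rw [← hnu, hgsum] at hle
      have hgt : nuStar H < (∑ e : {e : Set ℝ // e ∈ E}, gE e) / lam := by
        rw [lt_div_iff₀ hlam, mul_comm]
        exact hcost'
      linarith
end
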